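/- arXiv:2509.02436 — 2 statements merged into one kernel-verified Lean document; each statement's English description precedes it below -/
import Mathlib

section
/- Let A be a real sequence over Z² with |A| = 3.99, maximal multiplicity ≤ 1/2, no line of multiplicity > 3/2, satisfying the replacement-closure property, such that (0,0), (1,0), (0,1), (1,1) all have multiplicity exactly 1/2 and these are the only points of multiplicity 1/2. Then one of (0,0), (1,0), (0,1), (1,1) is an interior point of Σ¹_R(A). -/
open scoped Classical

noncomputable section

def toR2 (a : ℤ × ℤ) : ℝ × ℝ := ((a.1 : ℝ), (a.2 : ℝ))

def sigmaR (lam : ℝ) (A : (ℤ × ℤ) →₀ ℝ) : Set (ℝ × ℝ) :=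
  { x | ∃ t : (ℤ × ℤ) → ℝ, (∀ a, 0 ≤ t a ∧ t a ≤ A a) ∧
      (∑ a ∈ A.support, t a) = lam ∧ (∑ a ∈ A.support, t a • toR2 a) = x }

def lineMult (A : (ℤ × ℤ) →₀ ℝ) (q w : ℝ × ℝ) : ℝ :=
  ∑ a ∈ A.support, if ∃ r : ℝ, toR2 a = q + r • w then A a else 0


def ReplacementClosed (A : (ℤ × ℤ) →₀ ℝ) : Prop :=
  ∀ v₁ v₂ v₃ v : ℤ × ℤ, v₁ ≠ v₂ → v₁ ≠ v₃ → v₂ ≠ v₃ →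
    v ≠ v₁ → v ≠ v₂ → v ≠ v₃ →
    0 < A v₁ → 0 < A v₂ → 0 < A v₃ →
    toR2 v ∈ convexHull ℝ {toR2 v₁, toR2 v₂, toR2 v₃} →
    A v = 1 / 2 ∨
      ∃ q w : ℝ × ℝ, w ≠ 0 ∧ (∃ r : ℝ, toR2 v = q + r • w) ∧
        lineMult A q w = 3 / 2 ∧
        ∀ x y : ℤ × ℤ, x ∈ ({v₁, v₂, v₃} : Set (ℤ × ℤ)) →
          y ∈ ({v₁, v₂, v₃} : Set (ℤ × ℤ)) → x ≠ y →
          toR2 v ∈ segment ℝ (toR2 x) (toR2 y) →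
          ¬ ((∃ r : ℝ, toR2 x = q + r • w) ∧ (∃ r : ℝ, toR2 y = q + r • w))

section AuxStmt11

variable {A : (ℤ × ℤ) →₀ ℝ}

private lemma clm_pair (f : (ℝ × ℝ) →L[ℝ] ℝ) (x y : ℝ) :
    f (x, y) = x * f (1, 0) + y * f (0, 1) := by
  have h : (x, y) = x • ((1:ℝ), (0:ℝ)) + y • ((0:ℝ), (1:ℝ)) := by simp [Prod.ext_iff]
  rw [h, map_add, map_smul, map_smul, smul_eq_mul, smul_eq_mul]

private lemma f_toR2 (f : (ℝ × ℝ) →L[ℝ] ℝ) (a : ℤ × ℤ) :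
    f (toR2 a) = (a.1 : ℝ) * f (1, 0) + (a.2 : ℝ) * f (0, 1) := by
  rw [toR2, clm_pair]

private lemma f_ne_zero (f : (ℝ × ℝ) →L[ℝ] ℝ) (hf : f ≠ 0) :
    ¬ (f (1, 0) = 0 ∧ f (0, 1) = 0) := by
  rintro ⟨h1, h2⟩
  apply hf
  apply ContinuousLinearMap.ext
  intro v
  have hv := clm_pair f v.1 v.2
  rw [Prod.mk.eta] at hv
  rw [hv, h1, h2]
  simp

/-- generic membership + value computation lemma -/
private lemma value_lemma (hnonneg : ∀ a, 0 ≤ A a)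
    (f : (ℝ × ℝ) →L[ℝ] ℝ)
    (c cf : ℤ × ℤ) (hcF : c ∈ A.support) (hcfF : cf ∈ A.support)
    (hAc : A c = 1/2) (hAcf : A cf = 1/2) (hccf : c ≠ cf)
    (P : ℤ × ℤ → Prop) [DecidablePred P] (hPc : ∀ a, P a → a ≠ c ∧ a ≠ cf)
    (γ β : ℝ) (hγ0 : 0 ≤ γ) (hγ1 : γ ≤ 1) (hβ0 : 0 ≤ β) (hβ : β ≤ 1/2)
    (heq : 1/2 + γ * (∑ a ∈ A.support.filter P, A a) + β = 1) :
    ∃ x ∈ sigmaR 1 A,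
      f x = 1/2 * f (toR2 c) + γ * (∑ a ∈ A.support.filter P, A a * f (toR2 a))
        + β * f (toR2 cf) := by
  classical
  set t : (ℤ × ℤ) → ℝ := fun a =>
    (if a = c then 1/2 else 0) + (if P a then γ * A a else 0)
      + (if a = cf then β else 0) with ht
  have hb : ∀ a, 0 ≤ t a ∧ t a ≤ A a := by
    intro a
    by_cases h1 : a = c
    · subst h1
      have hP : ¬ P a := fun h => (hPc a h).1 rfl
      have hta : t a = 1/2 := by simp [ht, hP, hccf]
      rw [hta, hAc]
      norm_num
    · by_cases h2 : a = cf
      · subst h2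
        have hP : ¬ P a := fun h => (hPc a h).2 rfl
        have hta : t a = β := by simp [ht, hP, h1]
        rw [hta, hAcf]
        exact ⟨hβ0, hβ⟩
      · by_cases h3 : P a
        · simp only [ht, if_neg h1, if_pos h3, if_neg h2, add_zero, zero_add]
          exact ⟨mul_nonneg hγ0 (hnonneg a), by
            calc γ * A a ≤ 1 * A a := mul_le_mul_of_nonneg_right hγ1 (hnonneg a)
            _ = A a := one_mul _⟩
        · simp only [ht, if_neg h1, if_neg h3, if_neg h2, add_zero, zero_add]
          exact ⟨le_refl _, hnonneg a⟩
  have hsum_c : (∑ a ∈ A.support, if a = c then (1/2:ℝ) else 0) = 1/2 := by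
    rw [Finset.sum_ite_eq' A.support c (fun _ => (1/2:ℝ)), if_pos hcF]
  have hsum_cf : (∑ a ∈ A.support, if a = cf then β else 0) = β := by
    rw [Finset.sum_ite_eq' A.support cf (fun _ => β), if_pos hcfF]
  have hsum_P : (∑ a ∈ A.support, if P a then γ * A a else 0)
      = γ * (∑ a ∈ A.support.filter P, A a) := by
    rw [Finset.mul_sum, ← Finset.sum_filter]
  have hsum1 : (∑ a ∈ A.support, t a) = 1 := by
    simp only [ht]
    rw [Finset.sum_add_distrib, Finset.sum_add_distrib, hsum_c, hsum_P, hsum_cf]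
    linarith [heq]
  refine ⟨∑ a ∈ A.support, t a • toR2 a, ⟨t, hb, hsum1, rfl⟩, ?_⟩
  rw [map_sum]
  have hterm : ∀ a ∈ A.support, f (t a • toR2 a) = t a * f (toR2 a) := by
    intro a _; rw [map_smul, smul_eq_mul]
  rw [Finset.sum_congr rfl hterm]
  have hexp : ∀ a, t a * f (toR2 a)
      = (if a = c then 1/2 * f (toR2 a) else 0)
        + (if P a then γ * A a * f (toR2 a) else 0)
        + (if a = cf then β * f (toR2 a) else 0) := by
    intro a
    simp only [ht, add_mul, ite_mul, zero_mul]
  rw [Finset.sum_congr rfl (fun a _ => hexp a)]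
  rw [Finset.sum_add_distrib, Finset.sum_add_distrib]
  rw [Finset.sum_ite_eq' A.support c (fun a => 1/2 * f (toR2 a)), if_pos hcF]
  rw [Finset.sum_ite_eq' A.support cf (fun a => β * f (toR2 a)), if_pos hcfF]
  have : (∑ a ∈ A.support, if P a then γ * A a * f (toR2 a) else 0)
      = γ * (∑ a ∈ A.support.filter P, A a * f (toR2 a)) := by
    rw [Finset.mul_sum, ← Finset.sum_filter]
    exact Finset.sum_congr rfl (fun a _ => by ring)
  rw [this]

private lemma convex_sigmaR : Convex ℝ (sigmaR 1 A) := by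
  rintro x ⟨tx, htx, htx1, htxv⟩ y ⟨ty, hty, hty1, htyv⟩ α β hα hβ hαβ
  refine ⟨fun a => α * tx a + β * ty a, ?_, ?_, ?_⟩
  · intro a
    refine ⟨add_nonneg (mul_nonneg hα (htx a).1) (mul_nonneg hβ (hty a).1), ?_⟩
    calc α * tx a + β * ty a ≤ α * A a + β * A a :=
          add_le_add (mul_le_mul_of_nonneg_left (htx a).2 hα)
            (mul_le_mul_of_nonneg_left (hty a).2 hβ)
      _ = A a := by rw [← add_mul, hαβ, one_mul]
  · rw [Finset.sum_add_distrib, ← Finset.mul_sum, ← Finset.mul_sum, htx1, hty1]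
    simpa using hαβ
  · rw [← htxv, ← htyv, Finset.smul_sum, Finset.smul_sum, ← Finset.sum_add_distrib]
    exact Finset.sum_congr rfl (fun a _ => by rw [add_smul, smul_smul, smul_smul])

private lemma mem_supp_of_half {c : ℤ × ℤ} (h : A c = 1/2) : c ∈ A.support :=
  Finsupp.mem_support_iff.mpr (by rw [h]; norm_num)

private lemma ball_subset (hnonneg : ∀ a, 0 ≤ A a)
    (h00 : A (0,0) = 1/2) (h10 : A (1,0) = 1/2)
    (h01 : A (0,1) = 1/2) (h11 : A (1,1) = 1/2) :
    Metric.ball ((1/2, 1/2) : ℝ × ℝ) (1/10) ⊆ sigmaR 1 A := by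
  intro z hz
  have hd : dist z ((1/2, 1/2) : ℝ × ℝ) < 1/10 := Metric.mem_ball.mp hz
  rw [Prod.dist_eq] at hd
  have hd1 : |z.1 - 1/2| < 1/10 := by
    have := (max_lt_iff.mp hd).1; rwa [Real.dist_eq] at this
  have hd2 : |z.2 - 1/2| < 1/10 := by
    have := (max_lt_iff.mp hd).2; rwa [Real.dist_eq] at this
  obtain ⟨hx1a, hx1b⟩ := abs_lt.mp hd1
  obtain ⟨hx2a, hx2b⟩ := abs_lt.mp hd2
  set x₁ := z.1 with hzx1; set x₂ := z.2 with hzx2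
  set t : (ℤ × ℤ) → ℝ := fun a =>
    if a = (0,0) then (1-x₁)*(1-x₂) else if a = (1,0) then x₁*(1-x₂)
    else if a = (0,1) then (1-x₁)*x₂ else if a = (1,1) then x₁*x₂ else 0 with ht
  have t00 : t (0,0) = (1-x₁)*(1-x₂) := by
    simp [ht]
  have t10 : t (1,0) = x₁*(1-x₂) := by
    simp [ht, Prod.mk.injEq]
  have t01 : t (0,1) = (1-x₁)*x₂ := by
    simp [ht, Prod.mk.injEq]
  have t11 : t (1,1) = x₁*x₂ := by
    simp only [ht]
    rw [if_neg (by decide), if_neg (by decide), if_neg (by decide), if_pos trivial]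
  have hC4 : ({((0:ℤ),(0:ℤ)), (1,0), (0,1), (1,1)} : Finset (ℤ × ℤ)) ⊆ A.support := by
    intro a ha
    simp only [Finset.mem_insert, Finset.mem_singleton] at ha
    rcases ha with rfl | rfl | rfl | rfl
    exacts [mem_supp_of_half h00, mem_supp_of_half h10,
      mem_supp_of_half h01, mem_supp_of_half h11]
  have hb : ∀ a, 0 ≤ t a ∧ t a ≤ A a := by
    intro a
    by_cases e0 : a = (0,0)
    · subst e0; rw [t00, h00]; constructor <;> nlinarith
    by_cases e1 : a = (1,0)
    · subst e1; rw [t10, h10]; constructor <;> nlinarith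
    by_cases e2 : a = (0,1)
    · subst e2; rw [t01, h01]; constructor <;> nlinarith
    by_cases e3 : a = (1,1)
    · subst e3; rw [t11, h11]; constructor <;> nlinarith
    · have hta : t a = 0 := by rw [ht]; simp only [if_neg e0, if_neg e1, if_neg e2, if_neg e3]
      rw [hta]; exact ⟨le_refl _, hnonneg a⟩
  have hvanish : ∀ a, a ∉ ({((0:ℤ),(0:ℤ)), (1,0), (0,1), (1,1)} : Finset (ℤ × ℤ)) → t a = 0 := by
    intro a ha
    simp only [Finset.mem_insert, Finset.mem_singleton, not_or] at ha
    obtain ⟨e0, e1, e2, e3⟩ := ha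
    rw [ht]; simp only [if_neg e0, if_neg e1, if_neg e2, if_neg e3]
  have hsplit : ∀ {M : Type} [AddCommMonoid M], ∀ g : (ℤ × ℤ) → M,
      (∑ a ∈ ({((0:ℤ),(0:ℤ)), (1,0), (0,1), (1,1)} : Finset (ℤ × ℤ)), g a)
        = g (0,0) + (g (1,0) + (g (0,1) + g (1,1))) := by
    intro M _ g
    rw [show ({((0:ℤ),(0:ℤ)), (1,0), (0,1), (1,1)} : Finset (ℤ × ℤ))
        = insert ((0:ℤ),(0:ℤ)) (insert ((1:ℤ),(0:ℤ)) (insert ((0:ℤ),(1:ℤ)) {((1:ℤ),(1:ℤ))})) from rfl]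
    rw [Finset.sum_insert (by decide), Finset.sum_insert (by decide),
      Finset.sum_insert (by decide), Finset.sum_singleton]

  have hsum1 : (∑ a ∈ A.support, t a) = 1 := by
    rw [← Finset.sum_subset hC4 (fun a _ ha => hvanish a ha), hsplit, t00, t10, t01, t11]
    ring
  have hsumv : (∑ a ∈ A.support, t a • toR2 a) = z := by
    rw [← Finset.sum_subset hC4 (fun a _ ha => by rw [hvanish a ha, zero_smul]),
      hsplit (fun a => t a • toR2 a)]
    rw [t00, t10, t01, t11]
    have e1 : toR2 (0,0) = ((0:ℝ), (0:ℝ)) := by simp [toR2]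
    have e2 : toR2 (1,0) = ((1:ℝ), (0:ℝ)) := by simp [toR2]
    have e3 : toR2 (0,1) = ((0:ℝ), (1:ℝ)) := by simp [toR2]
    have e4 : toR2 (1,1) = ((1:ℝ), (1:ℝ)) := by simp [toR2]
    rw [e1, e2, e3, e4]
    rw [Prod.ext_iff]
    constructor
    · simp only [Prod.smul_mk, Prod.fst_add, smul_eq_mul]
      rw [hzx1]; ring
    · simp only [Prod.smul_mk, Prod.snd_add, smul_eq_mul]
      rw [hzx2]; ring
  exact ⟨t, hb, hsum1, hsumv⟩

private lemma interior_of_sep (hnonneg : ∀ a, 0 ≤ A a)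
    (h00 : A (0,0) = 1/2) (h10 : A (1,0) = 1/2)
    (h01 : A (0,1) = 1/2) (h11 : A (1,1) = 1/2) (c : ℤ × ℤ)
    (hsep : ∀ f : (ℝ × ℝ) →L[ℝ] ℝ, f ≠ 0 → ∃ x ∈ sigmaR 1 A, f (toR2 c) < f x) :
    toR2 c ∈ interior (sigmaR 1 A) := by
  by_contra hc
  have hconv : Convex ℝ (sigmaR 1 A) := convex_sigmaR
  have hy₀ : ((1/2, 1/2) : ℝ × ℝ) ∈ interior (sigmaR 1 A) :=
    mem_interior.mpr ⟨Metric.ball _ (1/10), ball_subset hnonneg h00 h10 h01 h11,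
      Metric.isOpen_ball, Metric.mem_ball_self (by norm_num)⟩
  obtain ⟨f, u, hfu, hcu⟩ := geometric_hahn_banach_open hconv.interior isOpen_interior
    (convex_singleton (toR2 c)) (Set.disjoint_singleton_right.mpr hc)
  have hcu' : u ≤ f (toR2 c) := hcu _ rfl
  have hy₀u : f ((1/2, 1/2) : ℝ × ℝ) < u := hfu _ hy₀
  have hfne : f ≠ 0 := by
    rintro rfl
    simp only [ContinuousLinearMap.zero_apply] at hy₀u hcu'
    linarith
  obtain ⟨x, hxS, hfx⟩ := hsep f hfne
  have hxS' : x ∈ sigmaR 1 A := hxS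
  set b := f x with hb
  set av := f (toR2 c) with hav
  set yv := f ((1/2, 1/2) : ℝ × ℝ) with hyv
  have hyb : yv < b := by linarith
  have hab : av < b := hfx
  set ε := (b - av) / (b - yv) with hε
  have hby : 0 < b - yv := by linarith
  have hε0 : 0 < ε := div_pos (by linarith) hby
  have hε1 : ε < 1 := (div_lt_one hby).mpr (by linarith)
  have hmem : ε • ((1/2, 1/2) : ℝ × ℝ) + (1 - ε) • x ∈ interior (sigmaR 1 A) :=
    hconv.combo_interior_self_mem_interior hy₀ hxS' hε0 (by linarith) (by ring)
  have hlt := hfu _ hmem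
  rw [map_add, map_smul, map_smul, smul_eq_mul, smul_eq_mul] at hlt
  have hεval : ε * (b - yv) = b - av := div_mul_cancel₀ _ (ne_of_gt hby)
  have : ε * yv + (1 - ε) * b = av := by nlinarith [hεval]
  rw [← hyv, ← hb] at hlt
  linarith [this ▸ hlt]

private lemma sum_filter_single (p : ℤ × ℤ) (hp : p ∈ A.support) (h : ℤ × ℤ → ℝ) :
    (∑ a ∈ A.support.filter (fun a => a = p), h a) = h p := by
  rw [Finset.filter_eq' A.support p, if_pos hp, Finset.sum_singleton]

private lemma supp_pos {p : ℤ × ℤ} (hnonneg : ∀ a, 0 ≤ A a) (hp : p ∈ A.support) :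
    0 < A p :=
  (hnonneg p).lt_of_ne (Ne.symm (Finsupp.mem_support_iff.mp hp))

set_option maxHeartbeats 1000000 in
private lemma sep11 (hnonneg : ∀ a, 0 ≤ A a) (hmax : ∀ a, A a ≤ 1/2)
    (h00 : A (0,0) = 1/2) (h10 : A (1,0) = 1/2) (h01 : A (0,1) = 1/2) (h11 : A (1,1) = 1/2)
    (hq : 1/4 < ∑ a ∈ A.support.filter (fun a => 1 ≤ a.1 ∧ 1 ≤ a.2 ∧ a ≠ (1,1)), A a)
    (hR : ∃ p ∈ A.support, 2 ≤ p.1) (hU : ∃ p ∈ A.support, 2 ≤ p.2) :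
    toR2 ((1:ℤ), (1:ℤ)) ∈ interior (sigmaR 1 A) := by
  apply interior_of_sep hnonneg h00 h10 h01 h11
  intro f hf
  set f₁ := f (1, 0) with hf₁
  set f₂ := f (0, 1) with hf₂
  set q := ∑ a ∈ A.support.filter (fun a => 1 ≤ a.1 ∧ 1 ≤ a.2 ∧ a ≠ (1,1)), A a with hqdef
  clear_value q
  have hgc : f (toR2 ((1:ℤ),(1:ℤ))) = f₁ + f₂ := by rw [f_toR2, ← hf₁, ← hf₂]; push_cast; ring
  have hg01 : f (toR2 ((0:ℤ),(1:ℤ))) = f₂ := by rw [f_toR2, ← hf₁, ← hf₂]; push_cast; ring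
  have hg10 : f (toR2 ((1:ℤ),(0:ℤ))) = f₁ := by rw [f_toR2, ← hf₁, ← hf₂]; push_cast; ring
  have m10 := mem_supp_of_half (A := A) h10
  have m01 := mem_supp_of_half (A := A) h01
  have m11 := mem_supp_of_half (A := A) h11
  rcases lt_or_ge f₁ 0 with hneg1 | hpos1
  · obtain ⟨x, hx, hval⟩ := value_lemma hnonneg f (1,1) (0,1) m11 m01 h11 h01 (by decide)
      (fun _ => False) (fun a ha => ha.elim) 0 (1/2)
      (le_refl 0) (by norm_num) (by norm_num) (le_refl _) (by ring)
    refine ⟨x, hx, ?_⟩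
    rw [hval, hgc, hg01]
    simp only [zero_mul]
    linarith
  rcases lt_or_ge f₂ 0 with hneg2 | hpos2
  · obtain ⟨x, hx, hval⟩ := value_lemma hnonneg f (1,1) (1,0) m11 m10 h11 h10 (by decide)
      (fun _ => False) (fun a ha => ha.elim) 0 (1/2)
      (le_refl 0) (by norm_num) (by norm_num) (le_refl _) (by ring)
    refine ⟨x, hx, ?_⟩
    rw [hval, hgc, hg10]
    simp only [zero_mul]
    linarith
  rcases eq_or_lt_of_le hpos1 with hzero1 | hf1pos
  · -- f₁ = 0, so f₂ > 0
    have hf2pos : 0 < f₂ := by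
      rcases eq_or_lt_of_le hpos2 with hzero2 | h
      · exact absurd ⟨hzero1.symm, hzero2.symm⟩ (f_ne_zero f hf)
      · exact h
    obtain ⟨p₀, hp₀F, hp₀⟩ := hU
    have hw0 : 0 < A p₀ := supp_pos hnonneg hp₀F
    have hwle : A p₀ ≤ 1/2 := hmax p₀
    have hp₀ne1 : p₀ ≠ (1,1) := by rintro rfl; norm_num at hp₀
    have hp₀ne2 : p₀ ≠ (0,1) := by rintro rfl; norm_num at hp₀
    obtain ⟨x, hx, hval⟩ := value_lemma hnonneg f (1,1) (0,1) m11 m01 h11 h01 (by decide)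
      (fun a => a = p₀) (by rintro a rfl; exact ⟨hp₀ne1, hp₀ne2⟩) 1 (1/2 - A p₀)
      (by norm_num) (le_refl 1) (by linarith) (by linarith)
      (by rw [sum_filter_single p₀ hp₀F]; ring)
    refine ⟨x, hx, ?_⟩
    rw [hval, sum_filter_single p₀ hp₀F (fun a => A a * f (toR2 a)), hgc, hg01,
      f_toR2, ← hf₁, ← hf₂, ← hzero1]
    have hc2 : (2:ℝ) ≤ (p₀.2 : ℝ) := by exact_mod_cast hp₀
    have key : 0 < A p₀ * (((p₀.2:ℝ) - 1) * f₂) :=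
      mul_pos hw0 (mul_pos (by linarith) hf2pos)
    nlinarith [key]
  rcases eq_or_lt_of_le hpos2 with hzero2 | hf2pos
  · -- f₂ = 0, f₁ > 0
    obtain ⟨p₀, hp₀F, hp₀⟩ := hR
    have hw0 : 0 < A p₀ := supp_pos hnonneg hp₀F
    have hwle : A p₀ ≤ 1/2 := hmax p₀
    have hp₀ne1 : p₀ ≠ (1,1) := by rintro rfl; norm_num at hp₀
    have hp₀ne2 : p₀ ≠ (1,0) := by rintro rfl; norm_num at hp₀
    obtain ⟨x, hx, hval⟩ := value_lemma hnonneg f (1,1) (1,0) m11 m10 h11 h10 (by decide)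
      (fun a => a = p₀) (by rintro a rfl; exact ⟨hp₀ne1, hp₀ne2⟩) 1 (1/2 - A p₀)
      (by norm_num) (le_refl 1) (by linarith) (by linarith)
      (by rw [sum_filter_single p₀ hp₀F]; ring)
    refine ⟨x, hx, ?_⟩
    rw [hval, sum_filter_single p₀ hp₀F (fun a => A a * f (toR2 a)), hgc, hg10,
      f_toR2, ← hf₁, ← hf₂, ← hzero2]
    have hc2 : (2:ℝ) ≤ (p₀.1 : ℝ) := by exact_mod_cast hp₀
    have key : 0 < A p₀ * (((p₀.1:ℝ) - 1) * f₁) :=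
      mul_pos hw0 (mul_pos (by linarith) hf1pos)
    nlinarith [key]
  -- main region case : f₁ > 0, f₂ > 0
  have hq0 : (0:ℝ) ≤ q := by
    rw [hqdef]; exact Finset.sum_nonneg (fun a _ => hnonneg a)
  have hbound : ∀ m : ℝ, m ≤ f₁ → m ≤ f₂ →
      ∀ a ∈ A.support.filter (fun a => 1 ≤ a.1 ∧ 1 ≤ a.2 ∧ a ≠ (1,1)),
        A a * (f₁ + f₂ + m) ≤ A a * f (toR2 a) := by
    intro m hm1 hm2 a ha
    rw [Finset.mem_filter] at ha
    obtain ⟨haF, ha1, ha2, hane⟩ := ha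
    refine mul_le_mul_of_nonneg_left ?_ (hnonneg a)
    rw [f_toR2, ← hf₁, ← hf₂]
    have hc1 : (1:ℝ) ≤ (a.1:ℝ) := by exact_mod_cast ha1
    have hc2 : (1:ℝ) ≤ (a.2:ℝ) := by exact_mod_cast ha2
    by_cases h2a : 2 ≤ a.1
    · have hd : (2:ℝ) ≤ (a.1:ℝ) := by exact_mod_cast h2a
      nlinarith
    · have hy2 : 2 ≤ a.2 := by
        have hne' : ¬(a.1 = 1 ∧ a.2 = 1) := by
          intro h
          exact hane (Prod.ext h.1 h.2)
        omega
      have hd : (2:ℝ) ≤ (a.2:ℝ) := by exact_mod_cast hy2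
      nlinarith
  have hkey : ∀ m : ℝ, m ≤ f₁ → m ≤ f₂ →
      q * (f₁ + f₂ + m) ≤ ∑ a ∈ A.support.filter (fun a => 1 ≤ a.1 ∧ 1 ≤ a.2 ∧ a ≠ (1,1)),
        A a * f (toR2 a) := by
    intro m hm1 hm2
    rw [hqdef, Finset.sum_mul]
    exact Finset.sum_le_sum (hbound m hm1 hm2)
  have hPc : ∀ a, (1 ≤ a.1 ∧ 1 ≤ a.2 ∧ a ≠ (1,1)) → a ≠ ((1:ℤ),(1:ℤ)) ∧ a ≠ ((0:ℤ),(1:ℤ)) := by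
    rintro a ⟨ha1, ha2, hane⟩
    refine ⟨hane, ?_⟩
    rintro rfl
    norm_num at ha1
  have hPc' : ∀ a, (1 ≤ a.1 ∧ 1 ≤ a.2 ∧ a ≠ (1,1)) → a ≠ ((1:ℤ),(1:ℤ)) ∧ a ≠ ((1:ℤ),(0:ℤ)) := by
    rintro a ⟨ha1, ha2, hane⟩
    refine ⟨hane, ?_⟩
    rintro rfl
    norm_num at ha2
  rcases le_or_gt q (1/2) with hqle | hqgt
  · rcases le_or_gt f₁ f₂ with h12 | h21
    · obtain ⟨x, hx, hval⟩ := value_lemma hnonneg f (1,1) (0,1) m11 m01 h11 h01 (by decide)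
        (fun a => 1 ≤ a.1 ∧ 1 ≤ a.2 ∧ a ≠ (1,1)) hPc 1 (1/2 - q)
        (by norm_num) (le_refl 1) (by linarith) (by linarith)
        (by rw [← hqdef]; ring)
      refine ⟨x, hx, ?_⟩
      rw [hval, hgc, hg01]
      have hk := hkey f₁ (le_refl _) h12
      have hstep : 0 < (2*q - 1/2) * f₁ := mul_pos (by linarith) hf1pos
      linarith
    · obtain ⟨x, hx, hval⟩ := value_lemma hnonneg f (1,1) (1,0) m11 m10 h11 h10 (by decide)
        (fun a => 1 ≤ a.1 ∧ 1 ≤ a.2 ∧ a ≠ (1,1)) hPc' 1 (1/2 - q)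
        (by norm_num) (le_refl 1) (by linarith) (by linarith)
        (by rw [← hqdef]; ring)
      refine ⟨x, hx, ?_⟩
      rw [hval, hgc, hg10]
      have hk := hkey f₂ (le_of_lt h21) (le_refl _)
      have hstep : 0 < (2*q - 1/2) * f₂ := mul_pos (by linarith) hf2pos
      linarith
  · have h2q : (0:ℝ) < 2*q := by linarith
    have hγ0 : (0:ℝ) ≤ 1/(2*q) := by positivity
    have hγ1 : 1/(2*q) ≤ 1 := by rw [div_le_one h2q]; linarith
    have hqne : q ≠ 0 := ne_of_gt (by linarith)
    have heqq : 1/2 + (1/(2*q)) * (∑ a ∈ A.support.filter (fun a => 1 ≤ a.1 ∧ 1 ≤ a.2 ∧ a ≠ (1,1)), A a) + 0 = 1 := by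
      rw [← hqdef]
      have hh : q / (2*q) = 1/2 := by
        rw [div_eq_iff (ne_of_gt h2q)]; ring
      rw [div_mul_eq_mul_div, one_mul, hh]
      norm_num
    obtain ⟨x, hx, hval⟩ := value_lemma hnonneg f (1,1) (1,0) m11 m10 h11 h10 (by decide)
      (fun a => 1 ≤ a.1 ∧ 1 ≤ a.2 ∧ a ≠ (1,1)) hPc' (1/(2*q)) 0
      hγ0 hγ1 (le_refl 0) (by norm_num) heqq
    refine ⟨x, hx, ?_⟩
    rw [hval, hgc]
    simp only [zero_mul, add_zero]
    rcases le_or_gt f₁ f₂ with h12 | h21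
    · have hk := hkey f₁ (le_refl _) h12
      have hmono := mul_le_mul_of_nonneg_left hk hγ0
      have hcalc : (1/(2*q)) * (q * (f₁ + f₂ + f₁)) = (f₁ + f₂ + f₁)/2 := by
        rw [div_mul_eq_mul_div, one_mul, div_eq_iff (ne_of_gt h2q)]
        ring
      linarith
    · have hk := hkey f₂ (le_of_lt h21) (le_refl _)
      have hmono := mul_le_mul_of_nonneg_left hk hγ0
      have hcalc : (1/(2*q)) * (q * (f₁ + f₂ + f₂)) = (f₁ + f₂ + f₂)/2 := by
        rw [div_mul_eq_mul_div, one_mul, div_eq_iff (ne_of_gt h2q)]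
        ring
      linarith

set_option maxHeartbeats 1000000 in
private lemma sep00 (hnonneg : ∀ a, 0 ≤ A a) (hmax : ∀ a, A a ≤ 1/2)
    (h00 : A (0,0) = 1/2) (h10 : A (1,0) = 1/2) (h01 : A (0,1) = 1/2) (h11 : A (1,1) = 1/2)
    (hq : 1/4 < ∑ a ∈ A.support.filter (fun a => a.1 ≤ 0 ∧ a.2 ≤ 0 ∧ a ≠ (0,0)), A a)
    (hL : ∃ p ∈ A.support, p.1 ≤ -1) (hD : ∃ p ∈ A.support, p.2 ≤ -1) :
    toR2 ((0:ℤ), (0:ℤ)) ∈ interior (sigmaR 1 A) := by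
  apply interior_of_sep hnonneg h00 h10 h01 h11
  intro f hf
  set f₁ := f (1, 0) with hf₁
  set f₂ := f (0, 1) with hf₂
  set q := ∑ a ∈ A.support.filter (fun a => a.1 ≤ 0 ∧ a.2 ≤ 0 ∧ a ≠ (0,0)), A a with hqdef
  clear_value q
  have hgc : f (toR2 ((0:ℤ),(0:ℤ))) = 0 := by rw [f_toR2, ← hf₁, ← hf₂]; push_cast; ring
  have hg01 : f (toR2 ((0:ℤ),(1:ℤ))) = f₂ := by rw [f_toR2, ← hf₁, ← hf₂]; push_cast; ring
  have hg10 : f (toR2 ((1:ℤ),(0:ℤ))) = f₁ := by rw [f_toR2, ← hf₁, ← hf₂]; push_cast; ring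
  have m00 := mem_supp_of_half (A := A) h00
  have m10 := mem_supp_of_half (A := A) h10
  have m01 := mem_supp_of_half (A := A) h01
  rcases lt_or_ge 0 f₁ with hneg1 | hpos1
  · obtain ⟨x, hx, hval⟩ := value_lemma hnonneg f (0,0) (1,0) m00 m10 h00 h10 (by decide)
      (fun _ => False) (fun a ha => ha.elim) 0 (1/2)
      (le_refl 0) (by norm_num) (by norm_num) (le_refl _) (by ring)
    refine ⟨x, hx, ?_⟩
    rw [hval, hgc, hg10]
    simp only [zero_mul]
    linarith
  rcases lt_or_ge 0 f₂ with hneg2 | hpos2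
  · obtain ⟨x, hx, hval⟩ := value_lemma hnonneg f (0,0) (0,1) m00 m01 h00 h01 (by decide)
      (fun _ => False) (fun a ha => ha.elim) 0 (1/2)
      (le_refl 0) (by norm_num) (by norm_num) (le_refl _) (by ring)
    refine ⟨x, hx, ?_⟩
    rw [hval, hgc, hg01]
    simp only [zero_mul]
    linarith
  rcases eq_or_lt_of_le hpos1 with hzero1 | hf1neg
  · -- f₁ = 0, so f₂ < 0
    have hf2neg : f₂ < 0 := by
      rcases eq_or_lt_of_le hpos2 with hzero2 | h
      · exact absurd ⟨hzero1, hzero2⟩ (f_ne_zero f hf)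
      · exact h
    obtain ⟨p₀, hp₀F, hp₀⟩ := hD
    have hw0 : 0 < A p₀ := supp_pos hnonneg hp₀F
    have hwle : A p₀ ≤ 1/2 := hmax p₀
    have hp₀ne1 : p₀ ≠ (0,0) := by rintro rfl; norm_num at hp₀
    have hp₀ne2 : p₀ ≠ (1,0) := by rintro rfl; norm_num at hp₀
    obtain ⟨x, hx, hval⟩ := value_lemma hnonneg f (0,0) (1,0) m00 m10 h00 h10 (by decide)
      (fun a => a = p₀) (by rintro a rfl; exact ⟨hp₀ne1, hp₀ne2⟩) 1 (1/2 - A p₀)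
      (by norm_num) (le_refl 1) (by linarith) (by linarith)
      (by rw [sum_filter_single p₀ hp₀F]; ring)
    refine ⟨x, hx, ?_⟩
    rw [hval, sum_filter_single p₀ hp₀F (fun a => A a * f (toR2 a)), hgc, hg10,
      f_toR2, ← hf₁, ← hf₂, hzero1]
    have hc2 : (p₀.2 : ℝ) ≤ -1 := by exact_mod_cast hp₀
    have key : 0 < A p₀ * ((-(p₀.2:ℝ)) * (-f₂)) :=
      mul_pos hw0 (mul_pos (by linarith) (by linarith))
    nlinarith [key]
  rcases eq_or_lt_of_le hpos2 with hzero2 | hf2neg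
  · -- f₂ = 0, f₁ < 0
    obtain ⟨p₀, hp₀F, hp₀⟩ := hL
    have hw0 : 0 < A p₀ := supp_pos hnonneg hp₀F
    have hwle : A p₀ ≤ 1/2 := hmax p₀
    have hp₀ne1 : p₀ ≠ (0,0) := by rintro rfl; norm_num at hp₀
    have hp₀ne2 : p₀ ≠ (0,1) := by rintro rfl; norm_num at hp₀
    obtain ⟨x, hx, hval⟩ := value_lemma hnonneg f (0,0) (0,1) m00 m01 h00 h01 (by decide)
      (fun a => a = p₀) (by rintro a rfl; exact ⟨hp₀ne1, hp₀ne2⟩) 1 (1/2 - A p₀)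
      (by norm_num) (le_refl 1) (by linarith) (by linarith)
      (by rw [sum_filter_single p₀ hp₀F]; ring)
    refine ⟨x, hx, ?_⟩
    rw [hval, sum_filter_single p₀ hp₀F (fun a => A a * f (toR2 a)), hgc, hg01,
      f_toR2, ← hf₁, ← hf₂, hzero2]
    have hc2 : (p₀.1 : ℝ) ≤ -1 := by exact_mod_cast hp₀
    have key : 0 < A p₀ * ((-(p₀.1:ℝ)) * (-f₁)) :=
      mul_pos hw0 (mul_pos (by linarith) (by linarith))
    nlinarith [key]
  -- main region case : f₁ < 0, f₂ < 0
  have hq0 : (0:ℝ) ≤ q := by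
    rw [hqdef]; exact Finset.sum_nonneg (fun a _ => hnonneg a)
  have hbound : ∀ m : ℝ, m ≤ -f₁ → m ≤ -f₂ →
      ∀ a ∈ A.support.filter (fun a => a.1 ≤ 0 ∧ a.2 ≤ 0 ∧ a ≠ (0,0)),
        A a * m ≤ A a * f (toR2 a) := by
    intro m hm1 hm2 a ha
    rw [Finset.mem_filter] at ha
    obtain ⟨haF, ha1, ha2, hane⟩ := ha
    refine mul_le_mul_of_nonneg_left ?_ (hnonneg a)
    rw [f_toR2, ← hf₁, ← hf₂]
    have hc1 : (a.1:ℝ) ≤ 0 := by exact_mod_cast ha1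
    have hc2 : (a.2:ℝ) ≤ 0 := by exact_mod_cast ha2
    by_cases h2a : a.1 ≤ -1
    · have hd : (a.1:ℝ) ≤ -1 := by exact_mod_cast h2a
      nlinarith
    · have hy2 : a.2 ≤ -1 := by
        have hne' : ¬(a.1 = 0 ∧ a.2 = 0) := by
          intro h
          exact hane (Prod.ext h.1 h.2)
        omega
      have hd : (a.2:ℝ) ≤ -1 := by exact_mod_cast hy2
      nlinarith
  have hkey : ∀ m : ℝ, m ≤ -f₁ → m ≤ -f₂ →
      q * m ≤ ∑ a ∈ A.support.filter (fun a => a.1 ≤ 0 ∧ a.2 ≤ 0 ∧ a ≠ (0,0)),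
        A a * f (toR2 a) := by
    intro m hm1 hm2
    rw [hqdef, Finset.sum_mul]
    exact Finset.sum_le_sum (hbound m hm1 hm2)
  have hPc : ∀ a, (a.1 ≤ 0 ∧ a.2 ≤ 0 ∧ a ≠ (0,0)) → a ≠ ((0:ℤ),(0:ℤ)) ∧ a ≠ ((1:ℤ),(0:ℤ)) := by
    rintro a ⟨ha1, ha2, hane⟩
    refine ⟨hane, ?_⟩
    rintro rfl
    norm_num at ha1
  have hPc' : ∀ a, (a.1 ≤ 0 ∧ a.2 ≤ 0 ∧ a ≠ (0,0)) → a ≠ ((0:ℤ),(0:ℤ)) ∧ a ≠ ((0:ℤ),(1:ℤ)) := by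
    rintro a ⟨ha1, ha2, hane⟩
    refine ⟨hane, ?_⟩
    rintro rfl
    norm_num at ha2
  rcases le_or_gt q (1/2) with hqle | hqgt
  · rcases le_or_gt (-f₁) (-f₂) with h12 | h21
    · obtain ⟨x, hx, hval⟩ := value_lemma hnonneg f (0,0) (1,0) m00 m10 h00 h10 (by decide)
        (fun a => a.1 ≤ 0 ∧ a.2 ≤ 0 ∧ a ≠ (0,0)) hPc 1 (1/2 - q)
        (by norm_num) (le_refl 1) (by linarith) (by linarith)
        (by rw [← hqdef]; ring)
      refine ⟨x, hx, ?_⟩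
      rw [hval, hgc, hg10]
      have hk := hkey (-f₁) (le_refl _) h12
      have hstep : 0 < (2*q - 1/2) * (-f₁) := mul_pos (by linarith) (by linarith)
      linarith
    · obtain ⟨x, hx, hval⟩ := value_lemma hnonneg f (0,0) (0,1) m00 m01 h00 h01 (by decide)
        (fun a => a.1 ≤ 0 ∧ a.2 ≤ 0 ∧ a ≠ (0,0)) hPc' 1 (1/2 - q)
        (by norm_num) (le_refl 1) (by linarith) (by linarith)
        (by rw [← hqdef]; ring)
      refine ⟨x, hx, ?_⟩
      rw [hval, hgc, hg01]
      have hk := hkey (-f₂) (le_of_lt h21) (le_refl _)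
      have hstep : 0 < (2*q - 1/2) * (-f₂) := mul_pos (by linarith) (by linarith)
      linarith
  · have h2q : (0:ℝ) < 2*q := by linarith
    have hγ0 : (0:ℝ) ≤ 1/(2*q) := by positivity
    have hγ1 : 1/(2*q) ≤ 1 := by rw [div_le_one h2q]; linarith
    have heqq : 1/2 + (1/(2*q)) * (∑ a ∈ A.support.filter (fun a => a.1 ≤ 0 ∧ a.2 ≤ 0 ∧ a ≠ (0,0)), A a) + 0 = 1 := by
      rw [← hqdef]
      have hh : q / (2*q) = 1/2 := by
        rw [div_eq_iff (ne_of_gt h2q)]; ring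
      rw [div_mul_eq_mul_div, one_mul, hh]
      norm_num
    obtain ⟨x, hx, hval⟩ := value_lemma hnonneg f (0,0) (1,0) m00 m10 h00 h10 (by decide)
      (fun a => a.1 ≤ 0 ∧ a.2 ≤ 0 ∧ a ≠ (0,0)) hPc (1/(2*q)) 0
      hγ0 hγ1 (le_refl 0) (by norm_num) heqq
    refine ⟨x, hx, ?_⟩
    rw [hval, hgc]
    simp only [zero_mul, add_zero]
    rcases le_or_gt (-f₁) (-f₂) with h12 | h21
    · have hk := hkey (-f₁) (le_refl _) h12
      have hmono := mul_le_mul_of_nonneg_left hk hγ0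
      have hcalc : (1/(2*q)) * (q * (-f₁)) = (-f₁)/2 := by
        rw [div_mul_eq_mul_div, one_mul, div_eq_iff (ne_of_gt h2q)]
        ring
      linarith
    · have hk := hkey (-f₂) (le_of_lt h21) (le_refl _)
      have hmono := mul_le_mul_of_nonneg_left hk hγ0
      have hcalc : (1/(2*q)) * (q * (-f₂)) = (-f₂)/2 := by
        rw [div_mul_eq_mul_div, one_mul, div_eq_iff (ne_of_gt h2q)]
        ring
      linarith

set_option maxHeartbeats 1000000 in
private lemma sep10 (hnonneg : ∀ a, 0 ≤ A a) (hmax : ∀ a, A a ≤ 1/2)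
    (h00 : A (0,0) = 1/2) (h10 : A (1,0) = 1/2) (h01 : A (0,1) = 1/2) (h11 : A (1,1) = 1/2)
    (hq : 1/4 < ∑ a ∈ A.support.filter (fun a => 1 ≤ a.1 ∧ a.2 ≤ 0 ∧ a ≠ (1,0)), A a)
    (hR : ∃ p ∈ A.support, 2 ≤ p.1) (hD : ∃ p ∈ A.support, p.2 ≤ -1) :
    toR2 ((1:ℤ), (0:ℤ)) ∈ interior (sigmaR 1 A) := by
  apply interior_of_sep hnonneg h00 h10 h01 h11
  intro f hf
  set f₁ := f (1, 0) with hf₁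
  set f₂ := f (0, 1) with hf₂
  set q := ∑ a ∈ A.support.filter (fun a => 1 ≤ a.1 ∧ a.2 ≤ 0 ∧ a ≠ (1,0)), A a with hqdef
  clear_value q
  have hgc : f (toR2 ((1:ℤ),(0:ℤ))) = f₁ := by rw [f_toR2, ← hf₁, ← hf₂]; push_cast; ring
  have hg00 : f (toR2 ((0:ℤ),(0:ℤ))) = 0 := by rw [f_toR2, ← hf₁, ← hf₂]; push_cast; ring
  have hg11 : f (toR2 ((1:ℤ),(1:ℤ))) = f₁ + f₂ := by rw [f_toR2, ← hf₁, ← hf₂]; push_cast; ring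
  have m00 := mem_supp_of_half (A := A) h00
  have m10 := mem_supp_of_half (A := A) h10
  have m11 := mem_supp_of_half (A := A) h11
  rcases lt_or_ge f₁ 0 with hneg1 | hpos1
  · obtain ⟨x, hx, hval⟩ := value_lemma hnonneg f (1,0) (0,0) m10 m00 h10 h00 (by decide)
      (fun _ => False) (fun a ha => ha.elim) 0 (1/2)
      (le_refl 0) (by norm_num) (by norm_num) (le_refl _) (by ring)
    refine ⟨x, hx, ?_⟩
    rw [hval, hgc, hg00]
    simp only [zero_mul]
    linarith
  rcases lt_or_ge 0 f₂ with hneg2 | hpos2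
  · obtain ⟨x, hx, hval⟩ := value_lemma hnonneg f (1,0) (1,1) m10 m11 h10 h11 (by decide)
      (fun _ => False) (fun a ha => ha.elim) 0 (1/2)
      (le_refl 0) (by norm_num) (by norm_num) (le_refl _) (by ring)
    refine ⟨x, hx, ?_⟩
    rw [hval, hgc, hg11]
    simp only [zero_mul]
    linarith
  rcases eq_or_lt_of_le hpos1 with hzero1 | hf1pos
  · -- f₁ = 0, so f₂ < 0
    have hf2neg : f₂ < 0 := by
      rcases eq_or_lt_of_le hpos2 with hzero2 | h
      · exact absurd ⟨hzero1.symm, hzero2⟩ (f_ne_zero f hf)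
      · exact h
    obtain ⟨p₀, hp₀F, hp₀⟩ := hD
    have hw0 : 0 < A p₀ := supp_pos hnonneg hp₀F
    have hwle : A p₀ ≤ 1/2 := hmax p₀
    have hp₀ne1 : p₀ ≠ (1,0) := by rintro rfl; norm_num at hp₀
    have hp₀ne2 : p₀ ≠ (0,0) := by rintro rfl; norm_num at hp₀
    obtain ⟨x, hx, hval⟩ := value_lemma hnonneg f (1,0) (0,0) m10 m00 h10 h00 (by decide)
      (fun a => a = p₀) (by rintro a rfl; exact ⟨hp₀ne1, hp₀ne2⟩) 1 (1/2 - A p₀)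
      (by norm_num) (le_refl 1) (by linarith) (by linarith)
      (by rw [sum_filter_single p₀ hp₀F]; ring)
    refine ⟨x, hx, ?_⟩
    rw [hval, sum_filter_single p₀ hp₀F (fun a => A a * f (toR2 a)), hgc, hg00,
      f_toR2, ← hf₁, ← hf₂, ← hzero1]
    have hc2 : (p₀.2 : ℝ) ≤ -1 := by exact_mod_cast hp₀
    have key : 0 < A p₀ * ((-(p₀.2:ℝ)) * (-f₂)) :=
      mul_pos hw0 (mul_pos (by linarith) (by linarith))
    nlinarith [key]
  rcases eq_or_lt_of_le hpos2 with hzero2 | hf2neg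
  · -- f₂ = 0, f₁ > 0
    obtain ⟨p₀, hp₀F, hp₀⟩ := hR
    have hw0 : 0 < A p₀ := supp_pos hnonneg hp₀F
    have hwle : A p₀ ≤ 1/2 := hmax p₀
    have hp₀ne1 : p₀ ≠ (1,0) := by rintro rfl; norm_num at hp₀
    have hp₀ne2 : p₀ ≠ (1,1) := by rintro rfl; norm_num at hp₀
    obtain ⟨x, hx, hval⟩ := value_lemma hnonneg f (1,0) (1,1) m10 m11 h10 h11 (by decide)
      (fun a => a = p₀) (by rintro a rfl; exact ⟨hp₀ne1, hp₀ne2⟩) 1 (1/2 - A p₀)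
      (by norm_num) (le_refl 1) (by linarith) (by linarith)
      (by rw [sum_filter_single p₀ hp₀F]; ring)
    refine ⟨x, hx, ?_⟩
    rw [hval, sum_filter_single p₀ hp₀F (fun a => A a * f (toR2 a)), hgc, hg11,
      f_toR2, ← hf₁, ← hf₂, hzero2]
    have hc2 : (2:ℝ) ≤ (p₀.1 : ℝ) := by exact_mod_cast hp₀
    have key : 0 < A p₀ * (((p₀.1:ℝ) - 1) * f₁) :=
      mul_pos hw0 (mul_pos (by linarith) hf1pos)
    nlinarith [key]
  -- main region case : f₁ > 0, f₂ < 0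
  have hq0 : (0:ℝ) ≤ q := by
    rw [hqdef]; exact Finset.sum_nonneg (fun a _ => hnonneg a)
  have hbound : ∀ m : ℝ, m ≤ f₁ → m ≤ -f₂ →
      ∀ a ∈ A.support.filter (fun a => 1 ≤ a.1 ∧ a.2 ≤ 0 ∧ a ≠ (1,0)),
        A a * (f₁ + m) ≤ A a * f (toR2 a) := by
    intro m hm1 hm2 a ha
    rw [Finset.mem_filter] at ha
    obtain ⟨haF, ha1, ha2, hane⟩ := ha
    refine mul_le_mul_of_nonneg_left ?_ (hnonneg a)
    rw [f_toR2, ← hf₁, ← hf₂]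
    have hc1 : (1:ℝ) ≤ (a.1:ℝ) := by exact_mod_cast ha1
    have hc2 : (a.2:ℝ) ≤ 0 := by exact_mod_cast ha2
    by_cases h2a : 2 ≤ a.1
    · have hd : (2:ℝ) ≤ (a.1:ℝ) := by exact_mod_cast h2a
      nlinarith
    · have hy2 : a.2 ≤ -1 := by
        have hne' : ¬(a.1 = 1 ∧ a.2 = 0) := by
          intro h
          exact hane (Prod.ext h.1 h.2)
        omega
      have hd : (a.2:ℝ) ≤ -1 := by exact_mod_cast hy2
      nlinarith
  have hkey : ∀ m : ℝ, m ≤ f₁ → m ≤ -f₂ →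
      q * (f₁ + m) ≤ ∑ a ∈ A.support.filter (fun a => 1 ≤ a.1 ∧ a.2 ≤ 0 ∧ a ≠ (1,0)),
        A a * f (toR2 a) := by
    intro m hm1 hm2
    rw [hqdef, Finset.sum_mul]
    exact Finset.sum_le_sum (hbound m hm1 hm2)
  have hPc : ∀ a, (1 ≤ a.1 ∧ a.2 ≤ 0 ∧ a ≠ (1,0)) → a ≠ ((1:ℤ),(0:ℤ)) ∧ a ≠ ((0:ℤ),(0:ℤ)) := by
    rintro a ⟨ha1, ha2, hane⟩
    refine ⟨hane, ?_⟩
    rintro rfl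
    norm_num at ha1
  have hPc' : ∀ a, (1 ≤ a.1 ∧ a.2 ≤ 0 ∧ a ≠ (1,0)) → a ≠ ((1:ℤ),(0:ℤ)) ∧ a ≠ ((1:ℤ),(1:ℤ)) := by
    rintro a ⟨ha1, ha2, hane⟩
    refine ⟨hane, ?_⟩
    rintro rfl
    norm_num at ha2
  rcases le_or_gt q (1/2) with hqle | hqgt
  · rcases le_or_gt f₁ (-f₂) with h12 | h21
    · obtain ⟨x, hx, hval⟩ := value_lemma hnonneg f (1,0) (0,0) m10 m00 h10 h00 (by decide)
        (fun a => 1 ≤ a.1 ∧ a.2 ≤ 0 ∧ a ≠ (1,0)) hPc 1 (1/2 - q)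
        (by norm_num) (le_refl 1) (by linarith) (by linarith)
        (by rw [← hqdef]; ring)
      refine ⟨x, hx, ?_⟩
      rw [hval, hgc, hg00]
      have hk := hkey f₁ (le_refl _) h12
      have hstep : 0 < (2*q - 1/2) * f₁ := mul_pos (by linarith) hf1pos
      linarith
    · obtain ⟨x, hx, hval⟩ := value_lemma hnonneg f (1,0) (1,1) m10 m11 h10 h11 (by decide)
        (fun a => 1 ≤ a.1 ∧ a.2 ≤ 0 ∧ a ≠ (1,0)) hPc' 1 (1/2 - q)
        (by norm_num) (le_refl 1) (by linarith) (by linarith)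
        (by rw [← hqdef]; ring)
      refine ⟨x, hx, ?_⟩
      rw [hval, hgc, hg11]
      have hk := hkey (-f₂) (le_of_lt h21) (le_refl _)
      have hstep : 0 < (2*q - 1/2) * (-f₂) := mul_pos (by linarith) (by linarith)
      linarith
  · have h2q : (0:ℝ) < 2*q := by linarith
    have hγ0 : (0:ℝ) ≤ 1/(2*q) := by positivity
    have hγ1 : 1/(2*q) ≤ 1 := by rw [div_le_one h2q]; linarith
    have heqq : 1/2 + (1/(2*q)) * (∑ a ∈ A.support.filter (fun a => 1 ≤ a.1 ∧ a.2 ≤ 0 ∧ a ≠ (1,0)), A a) + 0 = 1 := by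
      rw [← hqdef]
      have hh : q / (2*q) = 1/2 := by
        rw [div_eq_iff (ne_of_gt h2q)]; ring
      rw [div_mul_eq_mul_div, one_mul, hh]
      norm_num
    obtain ⟨x, hx, hval⟩ := value_lemma hnonneg f (1,0) (0,0) m10 m00 h10 h00 (by decide)
      (fun a => 1 ≤ a.1 ∧ a.2 ≤ 0 ∧ a ≠ (1,0)) hPc (1/(2*q)) 0
      hγ0 hγ1 (le_refl 0) (by norm_num) heqq
    refine ⟨x, hx, ?_⟩
    rw [hval, hgc]
    simp only [zero_mul, add_zero]
    rcases le_or_gt f₁ (-f₂) with h12 | h21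
    · have hk := hkey f₁ (le_refl _) h12
      have hmono := mul_le_mul_of_nonneg_left hk hγ0
      have hcalc : (1/(2*q)) * (q * (f₁ + f₁)) = (f₁ + f₁)/2 := by
        rw [div_mul_eq_mul_div, one_mul, div_eq_iff (ne_of_gt h2q)]
        ring
      linarith
    · have hk := hkey (-f₂) (le_of_lt h21) (le_refl _)
      have hmono := mul_le_mul_of_nonneg_left hk hγ0
      have hcalc : (1/(2*q)) * (q * (f₁ + -f₂)) = (f₁ + -f₂)/2 := by
        rw [div_mul_eq_mul_div, one_mul, div_eq_iff (ne_of_gt h2q)]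
        ring
      linarith

set_option maxHeartbeats 1000000 in
private lemma sep01 (hnonneg : ∀ a, 0 ≤ A a) (hmax : ∀ a, A a ≤ 1/2)
    (h00 : A (0,0) = 1/2) (h10 : A (1,0) = 1/2) (h01 : A (0,1) = 1/2) (h11 : A (1,1) = 1/2)
    (hq : 1/4 < ∑ a ∈ A.support.filter (fun a => a.1 ≤ 0 ∧ 1 ≤ a.2 ∧ a ≠ (0,1)), A a)
    (hL : ∃ p ∈ A.support, p.1 ≤ -1) (hU : ∃ p ∈ A.support, 2 ≤ p.2) :
    toR2 ((0:ℤ), (1:ℤ)) ∈ interior (sigmaR 1 A) := by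
  apply interior_of_sep hnonneg h00 h10 h01 h11
  intro f hf
  set f₁ := f (1, 0) with hf₁
  set f₂ := f (0, 1) with hf₂
  set q := ∑ a ∈ A.support.filter (fun a => a.1 ≤ 0 ∧ 1 ≤ a.2 ∧ a ≠ (0,1)), A a with hqdef
  clear_value q
  have hgc : f (toR2 ((0:ℤ),(1:ℤ))) = f₂ := by rw [f_toR2, ← hf₁, ← hf₂]; push_cast; ring
  have hg00 : f (toR2 ((0:ℤ),(0:ℤ))) = 0 := by rw [f_toR2, ← hf₁, ← hf₂]; push_cast; ring
  have hg11 : f (toR2 ((1:ℤ),(1:ℤ))) = f₁ + f₂ := by rw [f_toR2, ← hf₁, ← hf₂]; push_cast; ring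
  have m00 := mem_supp_of_half (A := A) h00
  have m01 := mem_supp_of_half (A := A) h01
  have m11 := mem_supp_of_half (A := A) h11
  rcases lt_or_ge f₂ 0 with hneg1 | hpos1
  · obtain ⟨x, hx, hval⟩ := value_lemma hnonneg f (0,1) (0,0) m01 m00 h01 h00 (by decide)
      (fun _ => False) (fun a ha => ha.elim) 0 (1/2)
      (le_refl 0) (by norm_num) (by norm_num) (le_refl _) (by ring)
    refine ⟨x, hx, ?_⟩
    rw [hval, hgc, hg00]
    simp only [zero_mul]
    linarith
  rcases lt_or_ge 0 f₁ with hneg2 | hpos2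
  · obtain ⟨x, hx, hval⟩ := value_lemma hnonneg f (0,1) (1,1) m01 m11 h01 h11 (by decide)
      (fun _ => False) (fun a ha => ha.elim) 0 (1/2)
      (le_refl 0) (by norm_num) (by norm_num) (le_refl _) (by ring)
    refine ⟨x, hx, ?_⟩
    rw [hval, hgc, hg11]
    simp only [zero_mul]
    linarith
  rcases eq_or_lt_of_le hpos1 with hzero1 | hf2pos
  · -- f₂ = 0, so f₁ < 0
    have hf1neg : f₁ < 0 := by
      rcases eq_or_lt_of_le hpos2 with hzero2 | h
      · exact absurd ⟨hzero2, hzero1.symm⟩ (f_ne_zero f hf)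
      · exact h
    obtain ⟨p₀, hp₀F, hp₀⟩ := hL
    have hw0 : 0 < A p₀ := supp_pos hnonneg hp₀F
    have hwle : A p₀ ≤ 1/2 := hmax p₀
    have hp₀ne1 : p₀ ≠ (0,1) := by rintro rfl; norm_num at hp₀
    have hp₀ne2 : p₀ ≠ (0,0) := by rintro rfl; norm_num at hp₀
    obtain ⟨x, hx, hval⟩ := value_lemma hnonneg f (0,1) (0,0) m01 m00 h01 h00 (by decide)
      (fun a => a = p₀) (by rintro a rfl; exact ⟨hp₀ne1, hp₀ne2⟩) 1 (1/2 - A p₀)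
      (by norm_num) (le_refl 1) (by linarith) (by linarith)
      (by rw [sum_filter_single p₀ hp₀F]; ring)
    refine ⟨x, hx, ?_⟩
    rw [hval, sum_filter_single p₀ hp₀F (fun a => A a * f (toR2 a)), hgc, hg00,
      f_toR2, ← hf₁, ← hf₂, ← hzero1]
    have hc2 : (p₀.1 : ℝ) ≤ -1 := by exact_mod_cast hp₀
    have key : 0 < A p₀ * ((-(p₀.1:ℝ)) * (-f₁)) :=
      mul_pos hw0 (mul_pos (by linarith) (by linarith))
    nlinarith [key]
  rcases eq_or_lt_of_le hpos2 with hzero2 | hf1neg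
  · -- f₁ = 0, f₂ > 0
    obtain ⟨p₀, hp₀F, hp₀⟩ := hU
    have hw0 : 0 < A p₀ := supp_pos hnonneg hp₀F
    have hwle : A p₀ ≤ 1/2 := hmax p₀
    have hp₀ne1 : p₀ ≠ (0,1) := by rintro rfl; norm_num at hp₀
    have hp₀ne2 : p₀ ≠ (1,1) := by rintro rfl; norm_num at hp₀
    obtain ⟨x, hx, hval⟩ := value_lemma hnonneg f (0,1) (1,1) m01 m11 h01 h11 (by decide)
      (fun a => a = p₀) (by rintro a rfl; exact ⟨hp₀ne1, hp₀ne2⟩) 1 (1/2 - A p₀)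
      (by norm_num) (le_refl 1) (by linarith) (by linarith)
      (by rw [sum_filter_single p₀ hp₀F]; ring)
    refine ⟨x, hx, ?_⟩
    rw [hval, sum_filter_single p₀ hp₀F (fun a => A a * f (toR2 a)), hgc, hg11,
      f_toR2, ← hf₁, ← hf₂, hzero2]
    have hc2 : (2:ℝ) ≤ (p₀.2 : ℝ) := by exact_mod_cast hp₀
    have key : 0 < A p₀ * (((p₀.2:ℝ) - 1) * f₂) :=
      mul_pos hw0 (mul_pos (by linarith) hf2pos)
    nlinarith [key]
  -- main region case : f₁ < 0, f₂ > 0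
  have hq0 : (0:ℝ) ≤ q := by
    rw [hqdef]; exact Finset.sum_nonneg (fun a _ => hnonneg a)
  have hbound : ∀ m : ℝ, m ≤ -f₁ → m ≤ f₂ →
      ∀ a ∈ A.support.filter (fun a => a.1 ≤ 0 ∧ 1 ≤ a.2 ∧ a ≠ (0,1)),
        A a * (f₂ + m) ≤ A a * f (toR2 a) := by
    intro m hm1 hm2 a ha
    rw [Finset.mem_filter] at ha
    obtain ⟨haF, ha1, ha2, hane⟩ := ha
    refine mul_le_mul_of_nonneg_left ?_ (hnonneg a)
    rw [f_toR2, ← hf₁, ← hf₂]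
    have hc1 : (a.1:ℝ) ≤ 0 := by exact_mod_cast ha1
    have hc2 : (1:ℝ) ≤ (a.2:ℝ) := by exact_mod_cast ha2
    by_cases h2a : a.1 ≤ -1
    · have hd : (a.1:ℝ) ≤ -1 := by exact_mod_cast h2a
      nlinarith
    · have hy2 : 2 ≤ a.2 := by
        have hne' : ¬(a.1 = 0 ∧ a.2 = 1) := by
          intro h
          exact hane (Prod.ext h.1 h.2)
        omega
      have hd : (2:ℝ) ≤ (a.2:ℝ) := by exact_mod_cast hy2
      nlinarith
  have hkey : ∀ m : ℝ, m ≤ -f₁ → m ≤ f₂ →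
      q * (f₂ + m) ≤ ∑ a ∈ A.support.filter (fun a => a.1 ≤ 0 ∧ 1 ≤ a.2 ∧ a ≠ (0,1)),
        A a * f (toR2 a) := by
    intro m hm1 hm2
    rw [hqdef, Finset.sum_mul]
    exact Finset.sum_le_sum (hbound m hm1 hm2)
  have hPc : ∀ a, (a.1 ≤ 0 ∧ 1 ≤ a.2 ∧ a ≠ (0,1)) → a ≠ ((0:ℤ),(1:ℤ)) ∧ a ≠ ((0:ℤ),(0:ℤ)) := by
    rintro a ⟨ha1, ha2, hane⟩
    refine ⟨hane, ?_⟩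
    rintro rfl
    norm_num at ha2
  have hPc' : ∀ a, (a.1 ≤ 0 ∧ 1 ≤ a.2 ∧ a ≠ (0,1)) → a ≠ ((0:ℤ),(1:ℤ)) ∧ a ≠ ((1:ℤ),(1:ℤ)) := by
    rintro a ⟨ha1, ha2, hane⟩
    refine ⟨hane, ?_⟩
    rintro rfl
    norm_num at ha1
  rcases le_or_gt q (1/2) with hqle | hqgt
  · rcases le_or_gt (-f₁) f₂ with h12 | h21
    · obtain ⟨x, hx, hval⟩ := value_lemma hnonneg f (0,1) (1,1) m01 m11 h01 h11 (by decide)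
        (fun a => a.1 ≤ 0 ∧ 1 ≤ a.2 ∧ a ≠ (0,1)) hPc' 1 (1/2 - q)
        (by norm_num) (le_refl 1) (by linarith) (by linarith)
        (by rw [← hqdef]; ring)
      refine ⟨x, hx, ?_⟩
      rw [hval, hgc, hg11]
      have hk := hkey (-f₁) (le_refl _) h12
      have hstep : 0 < (2*q - 1/2) * (-f₁) := mul_pos (by linarith) (by linarith)
      linarith
    · obtain ⟨x, hx, hval⟩ := value_lemma hnonneg f (0,1) (0,0) m01 m00 h01 h00 (by decide)
        (fun a => a.1 ≤ 0 ∧ 1 ≤ a.2 ∧ a ≠ (0,1)) hPc 1 (1/2 - q)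
        (by norm_num) (le_refl 1) (by linarith) (by linarith)
        (by rw [← hqdef]; ring)
      refine ⟨x, hx, ?_⟩
      rw [hval, hgc, hg00]
      have hk := hkey f₂ (le_of_lt h21) (le_refl _)
      have hstep : 0 < (2*q - 1/2) * f₂ := mul_pos (by linarith) hf2pos
      linarith
  · have h2q : (0:ℝ) < 2*q := by linarith
    have hγ0 : (0:ℝ) ≤ 1/(2*q) := by positivity
    have hγ1 : 1/(2*q) ≤ 1 := by rw [div_le_one h2q]; linarith
    have heqq : 1/2 + (1/(2*q)) * (∑ a ∈ A.support.filter (fun a => a.1 ≤ 0 ∧ 1 ≤ a.2 ∧ a ≠ (0,1)), A a) + 0 = 1 := by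
      rw [← hqdef]
      have hh : q / (2*q) = 1/2 := by
        rw [div_eq_iff (ne_of_gt h2q)]; ring
      rw [div_mul_eq_mul_div, one_mul, hh]
      norm_num
    obtain ⟨x, hx, hval⟩ := value_lemma hnonneg f (0,1) (0,0) m01 m00 h01 h00 (by decide)
      (fun a => a.1 ≤ 0 ∧ 1 ≤ a.2 ∧ a ≠ (0,1)) hPc (1/(2*q)) 0
      hγ0 hγ1 (le_refl 0) (by norm_num) heqq
    refine ⟨x, hx, ?_⟩
    rw [hval, hgc]
    simp only [zero_mul, add_zero]
    rcases le_or_gt (-f₁) f₂ with h12 | h21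
    · have hk := hkey (-f₁) (le_refl _) h12
      have hmono := mul_le_mul_of_nonneg_left hk hγ0
      have hcalc : (1/(2*q)) * (q * (f₂ + -f₁)) = (f₂ + -f₁)/2 := by
        rw [div_mul_eq_mul_div, one_mul, div_eq_iff (ne_of_gt h2q)]
        ring
      linarith
    · have hk := hkey f₂ (le_of_lt h21) (le_refl _)
      have hmono := mul_le_mul_of_nonneg_left hk hγ0
      have hcalc : (1/(2*q)) * (q * (f₂ + f₂)) = (f₂ + f₂)/2 := by
        rw [div_mul_eq_mul_div, one_mul, div_eq_iff (ne_of_gt h2q)]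
        ring
      linarith

private lemma lineMult_vert (k : ℤ) :
    lineMult A ((k:ℝ), 0) (0, 1) = ∑ a ∈ A.support.filter (fun a => a.1 = k), A a := by
  rw [lineMult, Finset.sum_filter]
  refine Finset.sum_congr rfl (fun a _ => ?_)
  by_cases h : a.1 = k
  · rw [if_pos ⟨(a.2:ℝ), by simp [toR2, Prod.ext_iff, h]⟩, if_pos h]
  · rw [if_neg ?_, if_neg h]
    rintro ⟨r, hr⟩
    rw [toR2, Prod.ext_iff] at hr
    simp only [Prod.fst_add, Prod.snd_add, Prod.smul_mk, smul_eq_mul] at hr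
    apply h
    have : (a.1 : ℝ) = (k : ℝ) := by rw [hr.1]; ring
    exact_mod_cast this

private lemma lineMult_horiz (k : ℤ) :
    lineMult A (0, (k:ℝ)) (1, 0) = ∑ a ∈ A.support.filter (fun a => a.2 = k), A a := by
  rw [lineMult, Finset.sum_filter]
  refine Finset.sum_congr rfl (fun a _ => ?_)
  by_cases h : a.2 = k
  · rw [if_pos ⟨(a.1:ℝ), by simp [toR2, Prod.ext_iff, h]⟩, if_pos h]
  · rw [if_neg ?_, if_neg h]
    rintro ⟨r, hr⟩
    rw [toR2, Prod.ext_iff] at hr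
    simp only [Prod.fst_add, Prod.snd_add, Prod.smul_mk, smul_eq_mul] at hr
    apply h
    have : (a.2 : ℝ) = (k : ℝ) := by rw [hr.2]; ring
    exact_mod_cast this

private lemma wvert_ne : ((0:ℝ), (1:ℝ)) ≠ (0 : ℝ × ℝ) := by
  intro h
  rw [Prod.ext_iff] at h
  norm_num at h

private lemma whoriz_ne : ((1:ℝ), (0:ℝ)) ≠ (0 : ℝ × ℝ) := by
  intro h
  rw [Prod.ext_iff] at h
  norm_num at h

private lemma sum_split (P Q : ℤ × ℤ → Prop) [DecidablePred P] [DecidablePred Q] :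
    (∑ a ∈ A.support.filter P, A a)
      = (∑ a ∈ A.support.filter (fun a => P a ∧ Q a), A a)
        + (∑ a ∈ A.support.filter (fun a => P a ∧ ¬ Q a), A a) := by
  rw [← Finset.sum_filter_add_sum_filter_not (A.support.filter P) Q A,
    Finset.filter_filter, Finset.filter_filter]

private lemma corner_extract (P : ℤ × ℤ → Prop) [DecidablePred P] (c : ℤ × ℤ)
    (hc : c ∈ A.support) (hPc : P c) :
    (∑ a ∈ A.support.filter P, A a)
      = A c + (∑ a ∈ A.support.filter (fun a => P a ∧ a ≠ c), A a) := by
  rw [← Finset.sum_filter_add_sum_filter_not (A.support.filter P) (fun a => a = c) A,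
    Finset.filter_filter, Finset.filter_filter]
  congr 1
  have : A.support.filter (fun a => P a ∧ a = c) = {c} := by
    ext a
    simp only [Finset.mem_filter, Finset.mem_singleton]
    constructor
    · rintro ⟨_, _, h⟩; exact h
    · rintro rfl; exact ⟨hc, hPc, rfl⟩
  rw [this, Finset.sum_singleton]

private lemma filter_sum_congr (P Q : ℤ × ℤ → Prop) [DecidablePred P] [DecidablePred Q]
    (H : ∀ a ∈ A.support, P a ↔ Q a) :
    (∑ a ∈ A.support.filter P, A a) = (∑ a ∈ A.support.filter Q, A a) := by
  have hfe : A.support.filter P = A.support.filter Q := Finset.filter_congr H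
  rw [hfe]

private lemma exists_LR (hlen : (∑ a ∈ A.support, A a) = 3.99)
    (hline : ∀ q w : ℝ × ℝ, w ≠ 0 → lineMult A q w ≤ 3 / 2) :
    (∃ p ∈ A.support, p.1 ≤ -1) ∨ (∃ p ∈ A.support, 2 ≤ p.1) := by
  by_contra h
  push_neg at h
  obtain ⟨hL, hR⟩ := h
  have hx0 : (∑ a ∈ A.support.filter (fun a => a.1 = 0), A a) ≤ 3/2 := by
    rw [← lineMult_vert 0]
    exact_mod_cast hline _ _ wvert_ne
  have hx1 : (∑ a ∈ A.support.filter (fun a => a.1 = 1), A a) ≤ 3/2 := by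
    rw [← lineMult_vert 1]
    exact_mod_cast hline _ _ wvert_ne
  have hsplit : (∑ a ∈ A.support, A a)
      = (∑ a ∈ A.support.filter (fun a => a.1 = 0), A a)
        + (∑ a ∈ A.support.filter (fun a => a.1 = 1), A a) := by
    rw [← Finset.sum_filter_add_sum_filter_not A.support (fun a => a.1 = 0) A]
    have hfe : A.support.filter (fun x => ¬ x.1 = 0) = A.support.filter (fun a => a.1 = 1) := by
      apply Finset.filter_congr
      intro x hx
      have h1 := hL x hx
      have h2 := hR x hx
      constructor <;> omega
    rw [hfe]
  rw [hlen] at hsplit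
  norm_num at hsplit
  linarith

private lemma exists_UD (hlen : (∑ a ∈ A.support, A a) = 3.99)
    (hline : ∀ q w : ℝ × ℝ, w ≠ 0 → lineMult A q w ≤ 3 / 2) :
    (∃ p ∈ A.support, p.2 ≤ -1) ∨ (∃ p ∈ A.support, 2 ≤ p.2) := by
  by_contra h
  push_neg at h
  obtain ⟨hD, hU⟩ := h
  have hx0 : (∑ a ∈ A.support.filter (fun a => a.2 = 0), A a) ≤ 3/2 := by
    rw [← lineMult_horiz 0]
    exact_mod_cast hline _ _ whoriz_ne
  have hx1 : (∑ a ∈ A.support.filter (fun a => a.2 = 1), A a) ≤ 3/2 := by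
    rw [← lineMult_horiz 1]
    exact_mod_cast hline _ _ whoriz_ne
  have hsplit : (∑ a ∈ A.support, A a)
      = (∑ a ∈ A.support.filter (fun a => a.2 = 0), A a)
        + (∑ a ∈ A.support.filter (fun a => a.2 = 1), A a) := by
    rw [← Finset.sum_filter_add_sum_filter_not A.support (fun a => a.2 = 0) A]
    have hfe : A.support.filter (fun x => ¬ x.2 = 0) = A.support.filter (fun a => a.2 = 1) := by
      apply Finset.filter_congr
      intro x hx
      have h1 := hD x hx
      have h2 := hU x hx
      constructor <;> omega
    rw [hfe]
  rw [hlen] at hsplit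
  norm_num at hsplit
  linarith

private lemma qsum (h00 : A (0,0) = 1/2) (h10 : A (1,0) = 1/2)
    (h01 : A (0,1) = 1/2) (h11 : A (1,1) = 1/2) :
    (∑ a ∈ A.support, A a)
      = 2 + (∑ a ∈ A.support.filter (fun a => a.1 ≤ 0 ∧ a.2 ≤ 0 ∧ a ≠ (0,0)), A a)
        + (∑ a ∈ A.support.filter (fun a => 1 ≤ a.1 ∧ a.2 ≤ 0 ∧ a ≠ (1,0)), A a)
        + (∑ a ∈ A.support.filter (fun a => a.1 ≤ 0 ∧ 1 ≤ a.2 ∧ a ≠ (0,1)), A a)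
        + (∑ a ∈ A.support.filter (fun a => 1 ≤ a.1 ∧ 1 ≤ a.2 ∧ a ≠ (1,1)), A a) := by
  have m00 := mem_supp_of_half (A := A) h00
  have m10 := mem_supp_of_half (A := A) h10
  have m01 := mem_supp_of_half (A := A) h01
  have m11 := mem_supp_of_half (A := A) h11
  have h1 : (∑ a ∈ A.support, A a)
      = (∑ a ∈ A.support.filter (fun a => a.1 ≤ 0), A a)
        + (∑ a ∈ A.support.filter (fun a => 1 ≤ a.1), A a) := by
    rw [← Finset.sum_filter_add_sum_filter_not A.support (fun a => a.1 ≤ 0) A]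
    have hfe : A.support.filter (fun a => ¬ a.1 ≤ 0) = A.support.filter (fun a => 1 ≤ a.1) :=
      Finset.filter_congr (fun x _ => by constructor <;> omega)
    rw [hfe]
  have h2 : (∑ a ∈ A.support.filter (fun a => a.1 ≤ 0), A a)
      = (∑ a ∈ A.support.filter (fun a => a.1 ≤ 0 ∧ a.2 ≤ 0), A a)
        + (∑ a ∈ A.support.filter (fun a => a.1 ≤ 0 ∧ 1 ≤ a.2), A a) := by
    rw [sum_split (fun a => a.1 ≤ 0) (fun a => a.2 ≤ 0)]
    congr 1
    exact filter_sum_congr _ _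
      (fun x _ => ⟨fun h => ⟨h.1, by omega⟩, fun h => ⟨h.1, by omega⟩⟩)
  have h3 : (∑ a ∈ A.support.filter (fun a => 1 ≤ a.1), A a)
      = (∑ a ∈ A.support.filter (fun a => 1 ≤ a.1 ∧ a.2 ≤ 0), A a)
        + (∑ a ∈ A.support.filter (fun a => 1 ≤ a.1 ∧ 1 ≤ a.2), A a) := by
    rw [sum_split (fun a => 1 ≤ a.1) (fun a => a.2 ≤ 0)]
    congr 1
    exact filter_sum_congr _ _
      (fun x _ => ⟨fun h => ⟨h.1, by omega⟩, fun h => ⟨h.1, by omega⟩⟩)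
  have e1 : (∑ a ∈ A.support.filter (fun a => a.1 ≤ 0 ∧ a.2 ≤ 0), A a)
      = A (0,0) + (∑ a ∈ A.support.filter (fun a => a.1 ≤ 0 ∧ a.2 ≤ 0 ∧ a ≠ (0,0)), A a) := by
    rw [corner_extract (fun a => a.1 ≤ 0 ∧ a.2 ≤ 0) (0,0) m00 (by decide)]
    congr 1
    exact filter_sum_congr _ _ (fun x _ => and_assoc)
  have e2 : (∑ a ∈ A.support.filter (fun a => 1 ≤ a.1 ∧ a.2 ≤ 0), A a)
      = A (1,0) + (∑ a ∈ A.support.filter (fun a => 1 ≤ a.1 ∧ a.2 ≤ 0 ∧ a ≠ (1,0)), A a) := by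
    rw [corner_extract (fun a => 1 ≤ a.1 ∧ a.2 ≤ 0) (1,0) m10 (by decide)]
    congr 1
    exact filter_sum_congr _ _ (fun x _ => and_assoc)
  have e3 : (∑ a ∈ A.support.filter (fun a => a.1 ≤ 0 ∧ 1 ≤ a.2), A a)
      = A (0,1) + (∑ a ∈ A.support.filter (fun a => a.1 ≤ 0 ∧ 1 ≤ a.2 ∧ a ≠ (0,1)), A a) := by
    rw [corner_extract (fun a => a.1 ≤ 0 ∧ 1 ≤ a.2) (0,1) m01 (by decide)]
    congr 1
    exact filter_sum_congr _ _ (fun x _ => and_assoc)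
  have e4 : (∑ a ∈ A.support.filter (fun a => 1 ≤ a.1 ∧ 1 ≤ a.2), A a)
      = A (1,1) + (∑ a ∈ A.support.filter (fun a => 1 ≤ a.1 ∧ 1 ≤ a.2 ∧ a ≠ (1,1)), A a) := by
    rw [corner_extract (fun a => 1 ≤ a.1 ∧ 1 ≤ a.2) (1,1) m11 (by decide)]
    congr 1
    exact filter_sum_congr _ _ (fun x _ => and_assoc)
  rw [h1, h2, h3, e1, e2, e3, e4, h00, h10, h01, h11]
  ring

private lemma claim_nD
    (hline : ∀ q w : ℝ × ℝ, w ≠ 0 → lineMult A q w ≤ 3 / 2)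
    (h00 : A (0,0) = 1/2) (h10 : A (1,0) = 1/2)
    (hD : ¬ ∃ p ∈ A.support, p.2 ≤ -1) :
    (∑ a ∈ A.support.filter (fun a => a.1 ≤ 0 ∧ a.2 ≤ 0 ∧ a ≠ (0,0)), A a)
      + (∑ a ∈ A.support.filter (fun a => 1 ≤ a.1 ∧ a.2 ≤ 0 ∧ a ≠ (1,0)), A a) ≤ 1/2 := by
  push_neg at hD
  have m00 := mem_supp_of_half (A := A) h00
  have m10 := mem_supp_of_half (A := A) h10
  have hy : (∑ a ∈ A.support.filter (fun a => a.2 = 0), A a) ≤ 3/2 := by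
    rw [← lineMult_horiz 0]
    exact_mod_cast hline _ _ whoriz_ne
  have hs : (∑ a ∈ A.support.filter (fun a => a.2 = 0), A a)
      = (∑ a ∈ A.support.filter (fun a => a.2 = 0 ∧ a.1 ≤ 0), A a)
        + (∑ a ∈ A.support.filter (fun a => a.2 = 0 ∧ ¬ a.1 ≤ 0), A a) :=
    sum_split _ _
  have e1 : (∑ a ∈ A.support.filter (fun a => a.2 = 0 ∧ a.1 ≤ 0), A a)
      = A (0,0) + (∑ a ∈ A.support.filter (fun a => a.1 ≤ 0 ∧ a.2 ≤ 0 ∧ a ≠ (0,0)), A a) := by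
    rw [corner_extract (fun a => a.2 = 0 ∧ a.1 ≤ 0) (0,0) m00 (by decide)]
    congr 1
    refine filter_sum_congr _ _ (fun x hx => ?_)
    have hDx := hD x hx
    constructor
    · rintro ⟨⟨hh1, hh2⟩, hh3⟩; exact ⟨hh2, by omega, hh3⟩
    · rintro ⟨hh1, hh2, hh3⟩; exact ⟨⟨by omega, hh1⟩, hh3⟩
  have e2 : (∑ a ∈ A.support.filter (fun a => a.2 = 0 ∧ ¬ a.1 ≤ 0), A a)
      = A (1,0) + (∑ a ∈ A.support.filter (fun a => 1 ≤ a.1 ∧ a.2 ≤ 0 ∧ a ≠ (1,0)), A a) := by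
    rw [corner_extract (fun a => a.2 = 0 ∧ ¬ a.1 ≤ 0) (1,0) m10 (by decide)]
    congr 1
    refine filter_sum_congr _ _ (fun x hx => ?_)
    have hDx := hD x hx
    constructor
    · rintro ⟨⟨hh1, hh2⟩, hh3⟩; exact ⟨by omega, by omega, hh3⟩
    · rintro ⟨hh1, hh2, hh3⟩; exact ⟨⟨by omega, by omega⟩, hh3⟩
  rw [hs, e1, e2, h00, h10] at hy
  linarith

private lemma claim_nU
    (hline : ∀ q w : ℝ × ℝ, w ≠ 0 → lineMult A q w ≤ 3 / 2)
    (h01 : A (0,1) = 1/2) (h11 : A (1,1) = 1/2)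
    (hU : ¬ ∃ p ∈ A.support, 2 ≤ p.2) :
    (∑ a ∈ A.support.filter (fun a => a.1 ≤ 0 ∧ 1 ≤ a.2 ∧ a ≠ (0,1)), A a)
      + (∑ a ∈ A.support.filter (fun a => 1 ≤ a.1 ∧ 1 ≤ a.2 ∧ a ≠ (1,1)), A a) ≤ 1/2 := by
  push_neg at hU
  have m01 := mem_supp_of_half (A := A) h01
  have m11 := mem_supp_of_half (A := A) h11
  have hy : (∑ a ∈ A.support.filter (fun a => a.2 = 1), A a) ≤ 3/2 := by
    rw [← lineMult_horiz 1]
    exact_mod_cast hline _ _ whoriz_ne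
  have hs : (∑ a ∈ A.support.filter (fun a => a.2 = 1), A a)
      = (∑ a ∈ A.support.filter (fun a => a.2 = 1 ∧ a.1 ≤ 0), A a)
        + (∑ a ∈ A.support.filter (fun a => a.2 = 1 ∧ ¬ a.1 ≤ 0), A a) :=
    sum_split _ _
  have e1 : (∑ a ∈ A.support.filter (fun a => a.2 = 1 ∧ a.1 ≤ 0), A a)
      = A (0,1) + (∑ a ∈ A.support.filter (fun a => a.1 ≤ 0 ∧ 1 ≤ a.2 ∧ a ≠ (0,1)), A a) := by
    rw [corner_extract (fun a => a.2 = 1 ∧ a.1 ≤ 0) (0,1) m01 (by decide)]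
    congr 1
    refine filter_sum_congr _ _ (fun x hx => ?_)
    have hUx := hU x hx
    constructor
    · rintro ⟨⟨hh1, hh2⟩, hh3⟩; exact ⟨hh2, by omega, hh3⟩
    · rintro ⟨hh1, hh2, hh3⟩; exact ⟨⟨by omega, hh1⟩, hh3⟩
  have e2 : (∑ a ∈ A.support.filter (fun a => a.2 = 1 ∧ ¬ a.1 ≤ 0), A a)
      = A (1,1) + (∑ a ∈ A.support.filter (fun a => 1 ≤ a.1 ∧ 1 ≤ a.2 ∧ a ≠ (1,1)), A a) := by
    rw [corner_extract (fun a => a.2 = 1 ∧ ¬ a.1 ≤ 0) (1,1) m11 (by decide)]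
    congr 1
    refine filter_sum_congr _ _ (fun x hx => ?_)
    have hUx := hU x hx
    constructor
    · rintro ⟨⟨hh1, hh2⟩, hh3⟩; exact ⟨by omega, by omega, hh3⟩
    · rintro ⟨hh1, hh2, hh3⟩; exact ⟨⟨by omega, by omega⟩, hh3⟩
  rw [hs, e1, e2, h01, h11] at hy
  linarith

private lemma claim_nL
    (hline : ∀ q w : ℝ × ℝ, w ≠ 0 → lineMult A q w ≤ 3 / 2)
    (h00 : A (0,0) = 1/2) (h01 : A (0,1) = 1/2)
    (hL : ¬ ∃ p ∈ A.support, p.1 ≤ -1) :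
    (∑ a ∈ A.support.filter (fun a => a.1 ≤ 0 ∧ a.2 ≤ 0 ∧ a ≠ (0,0)), A a)
      + (∑ a ∈ A.support.filter (fun a => a.1 ≤ 0 ∧ 1 ≤ a.2 ∧ a ≠ (0,1)), A a) ≤ 1/2 := by
  push_neg at hL
  have m00 := mem_supp_of_half (A := A) h00
  have m01 := mem_supp_of_half (A := A) h01
  have hy : (∑ a ∈ A.support.filter (fun a => a.1 = 0), A a) ≤ 3/2 := by
    rw [← lineMult_vert 0]
    exact_mod_cast hline _ _ wvert_ne
  have hs : (∑ a ∈ A.support.filter (fun a => a.1 = 0), A a)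
      = (∑ a ∈ A.support.filter (fun a => a.1 = 0 ∧ a.2 ≤ 0), A a)
        + (∑ a ∈ A.support.filter (fun a => a.1 = 0 ∧ ¬ a.2 ≤ 0), A a) :=
    sum_split _ _
  have e1 : (∑ a ∈ A.support.filter (fun a => a.1 = 0 ∧ a.2 ≤ 0), A a)
      = A (0,0) + (∑ a ∈ A.support.filter (fun a => a.1 ≤ 0 ∧ a.2 ≤ 0 ∧ a ≠ (0,0)), A a) := by
    rw [corner_extract (fun a => a.1 = 0 ∧ a.2 ≤ 0) (0,0) m00 (by decide)]
    congr 1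
    refine filter_sum_congr _ _ (fun x hx => ?_)
    have hLx := hL x hx
    constructor
    · rintro ⟨⟨hh1, hh2⟩, hh3⟩; exact ⟨by omega, hh2, hh3⟩
    · rintro ⟨hh1, hh2, hh3⟩; exact ⟨⟨by omega, hh2⟩, hh3⟩
  have e2 : (∑ a ∈ A.support.filter (fun a => a.1 = 0 ∧ ¬ a.2 ≤ 0), A a)
      = A (0,1) + (∑ a ∈ A.support.filter (fun a => a.1 ≤ 0 ∧ 1 ≤ a.2 ∧ a ≠ (0,1)), A a) := by
    rw [corner_extract (fun a => a.1 = 0 ∧ ¬ a.2 ≤ 0) (0,1) m01 (by decide)]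
    congr 1
    refine filter_sum_congr _ _ (fun x hx => ?_)
    have hLx := hL x hx
    constructor
    · rintro ⟨⟨hh1, hh2⟩, hh3⟩; exact ⟨by omega, by omega, hh3⟩
    · rintro ⟨hh1, hh2, hh3⟩; exact ⟨⟨by omega, by omega⟩, hh3⟩
  rw [hs, e1, e2, h00, h01] at hy
  linarith

private lemma claim_nR
    (hline : ∀ q w : ℝ × ℝ, w ≠ 0 → lineMult A q w ≤ 3 / 2)
    (h10 : A (1,0) = 1/2) (h11 : A (1,1) = 1/2)
    (hR : ¬ ∃ p ∈ A.support, 2 ≤ p.1) :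
    (∑ a ∈ A.support.filter (fun a => 1 ≤ a.1 ∧ a.2 ≤ 0 ∧ a ≠ (1,0)), A a)
      + (∑ a ∈ A.support.filter (fun a => 1 ≤ a.1 ∧ 1 ≤ a.2 ∧ a ≠ (1,1)), A a) ≤ 1/2 := by
  push_neg at hR
  have m10 := mem_supp_of_half (A := A) h10
  have m11 := mem_supp_of_half (A := A) h11
  have hy : (∑ a ∈ A.support.filter (fun a => a.1 = 1), A a) ≤ 3/2 := by
    rw [← lineMult_vert 1]
    exact_mod_cast hline _ _ wvert_ne
  have hs : (∑ a ∈ A.support.filter (fun a => a.1 = 1), A a)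
      = (∑ a ∈ A.support.filter (fun a => a.1 = 1 ∧ a.2 ≤ 0), A a)
        + (∑ a ∈ A.support.filter (fun a => a.1 = 1 ∧ ¬ a.2 ≤ 0), A a) :=
    sum_split _ _
  have e1 : (∑ a ∈ A.support.filter (fun a => a.1 = 1 ∧ a.2 ≤ 0), A a)
      = A (1,0) + (∑ a ∈ A.support.filter (fun a => 1 ≤ a.1 ∧ a.2 ≤ 0 ∧ a ≠ (1,0)), A a) := by
    rw [corner_extract (fun a => a.1 = 1 ∧ a.2 ≤ 0) (1,0) m10 (by decide)]
    congr 1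
    refine filter_sum_congr _ _ (fun x hx => ?_)
    have hRx := hR x hx
    constructor
    · rintro ⟨⟨hh1, hh2⟩, hh3⟩; exact ⟨by omega, hh2, hh3⟩
    · rintro ⟨hh1, hh2, hh3⟩; exact ⟨⟨by omega, hh2⟩, hh3⟩
  have e2 : (∑ a ∈ A.support.filter (fun a => a.1 = 1 ∧ ¬ a.2 ≤ 0), A a)
      = A (1,1) + (∑ a ∈ A.support.filter (fun a => 1 ≤ a.1 ∧ 1 ≤ a.2 ∧ a ≠ (1,1)), A a) := by
    rw [corner_extract (fun a => a.1 = 1 ∧ ¬ a.2 ≤ 0) (1,1) m11 (by decide)]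
    congr 1
    refine filter_sum_congr _ _ (fun x hx => ?_)
    have hRx := hR x hx
    constructor
    · rintro ⟨⟨hh1, hh2⟩, hh3⟩; exact ⟨by omega, by omega, hh3⟩
    · rintro ⟨hh1, hh2, hh3⟩; exact ⟨⟨by omega, by omega⟩, hh3⟩
  rw [hs, e1, e2, h10, h11] at hy
  linarith

end AuxStmt11


/-- if in a good, replacement-closed real sequence the four points
(0,0), (1,0), (0,1), (1,1) are exactly the points of multiplicity 1/2, then one of
them is an interior point of Σ¹_R(A). -/
theorem stmt11 (A : (ℤ × ℤ) →₀ ℝ)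
    (hnonneg : ∀ a, 0 ≤ A a)
    (hlen : (∑ a ∈ A.support, A a) = 3.99)
    (hmax : ∀ a, A a ≤ 1 / 2)
    (hline : ∀ q w : ℝ × ℝ, w ≠ 0 → lineMult A q w ≤ 3 / 2)
    (hrepl : ReplacementClosed A)
    (h00 : A (0, 0) = 1 / 2) (h10 : A (1, 0) = 1 / 2)
    (h01 : A (0, 1) = 1 / 2) (h11 : A (1, 1) = 1 / 2)
    (honly : ∀ a : ℤ × ℤ, A a = 1 / 2 →
      a ∈ ({(0, 0), (1, 0), (0, 1), (1, 1)} : Set (ℤ × ℤ))) :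
    ∃ a ∈ ({(0, 0), (1, 0), (0, 1), (1, 1)} : Set (ℤ × ℤ)),
      toR2 a ∈ interior (sigmaR 1 A) := by
  classical
  set q1 := (∑ a ∈ A.support.filter (fun a => a.1 ≤ 0 ∧ a.2 ≤ 0 ∧ a ≠ (0,0)), A a) with hq1
  set q2 := (∑ a ∈ A.support.filter (fun a => 1 ≤ a.1 ∧ a.2 ≤ 0 ∧ a ≠ (1,0)), A a) with hq2
  set q3 := (∑ a ∈ A.support.filter (fun a => a.1 ≤ 0 ∧ 1 ≤ a.2 ∧ a ≠ (0,1)), A a) with hq3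
  set q4 := (∑ a ∈ A.support.filter (fun a => 1 ≤ a.1 ∧ 1 ≤ a.2 ∧ a ≠ (1,1)), A a) with hq4
  have hsum : (3.99 : ℝ) = 2 + q1 + q2 + q3 + q4 := by
    rw [← hlen, hq1, hq2, hq3, hq4]
    exact qsum h00 h10 h01 h11
  norm_num at hsum
  have hq1nn : 0 ≤ q1 := by rw [hq1]; exact Finset.sum_nonneg (fun a _ => hnonneg a)
  have hq2nn : 0 ≤ q2 := by rw [hq2]; exact Finset.sum_nonneg (fun a _ => hnonneg a)
  have hq3nn : 0 ≤ q3 := by rw [hq3]; exact Finset.sum_nonneg (fun a _ => hnonneg a)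
  have hq4nn : 0 ≤ q4 := by rw [hq4]; exact Finset.sum_nonneg (fun a _ => hnonneg a)
  have use00 : (∃ p ∈ A.support, p.1 ≤ -1) → (∃ p ∈ A.support, p.2 ≤ -1) → 1/4 < q1 →
      ∃ a ∈ ({(0, 0), (1, 0), (0, 1), (1, 1)} : Set (ℤ × ℤ)),
        toR2 a ∈ interior (sigmaR 1 A) := fun hL hD h1 =>
    ⟨(0,0), by norm_num,
      sep00 hnonneg hmax h00 h10 h01 h11 (by rw [← hq1]; exact h1) hL hD⟩
  have use10 : (∃ p ∈ A.support, 2 ≤ p.1) → (∃ p ∈ A.support, p.2 ≤ -1) → 1/4 < q2 →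
      ∃ a ∈ ({(0, 0), (1, 0), (0, 1), (1, 1)} : Set (ℤ × ℤ)),
        toR2 a ∈ interior (sigmaR 1 A) := fun hR hD h2 =>
    ⟨(1,0), by norm_num,
      sep10 hnonneg hmax h00 h10 h01 h11 (by rw [← hq2]; exact h2) hR hD⟩
  have use01 : (∃ p ∈ A.support, p.1 ≤ -1) → (∃ p ∈ A.support, 2 ≤ p.2) → 1/4 < q3 →
      ∃ a ∈ ({(0, 0), (1, 0), (0, 1), (1, 1)} : Set (ℤ × ℤ)),
        toR2 a ∈ interior (sigmaR 1 A) := fun hL hU h3 =>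
    ⟨(0,1), by norm_num,
      sep01 hnonneg hmax h00 h10 h01 h11 (by rw [← hq3]; exact h3) hL hU⟩
  have use11 : (∃ p ∈ A.support, 2 ≤ p.1) → (∃ p ∈ A.support, 2 ≤ p.2) → 1/4 < q4 →
      ∃ a ∈ ({(0, 0), (1, 0), (0, 1), (1, 1)} : Set (ℤ × ℤ)),
        toR2 a ∈ interior (sigmaR 1 A) := fun hR hU h4 =>
    ⟨(1,1), by norm_num,
      sep11 hnonneg hmax h00 h10 h01 h11 (by rw [← hq4]; exact h4) hR hU⟩
  have cnD : ¬ (∃ p ∈ A.support, p.2 ≤ -1) → q1 + q2 ≤ 1/2 := fun h => by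
    rw [hq1, hq2]; exact claim_nD hline h00 h10 h
  have cnU : ¬ (∃ p ∈ A.support, 2 ≤ p.2) → q3 + q4 ≤ 1/2 := fun h => by
    rw [hq3, hq4]; exact claim_nU hline h01 h11 h
  have cnL : ¬ (∃ p ∈ A.support, p.1 ≤ -1) → q1 + q3 ≤ 1/2 := fun h => by
    rw [hq1, hq3]; exact claim_nL hline h00 h01 h
  have cnR : ¬ (∃ p ∈ A.support, 2 ≤ p.1) → q2 + q4 ≤ 1/2 := fun h => by
    rw [hq2, hq4]; exact claim_nR hline h10 h11 h
  rcases exists_LR (A := A) hlen hline with hL | hR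
  · rcases exists_UD (A := A) hlen hline with hD | hU
    · -- L, D
      by_cases h1 : 1/4 < q1
      · exact use00 hL hD h1
      by_cases hR : ∃ p ∈ A.support, 2 ≤ p.1
      · by_cases hU : ∃ p ∈ A.support, 2 ≤ p.2
        · by_cases h2 : 1/4 < q2
          · exact use10 hR hD h2
          by_cases h3 : 1/4 < q3
          · exact use01 hL hU h3
          by_cases h4 : 1/4 < q4
          · exact use11 hR hU h4
          · push_neg at h1 h2 h3 h4
            exfalso; linarith
        · -- ¬U
          have hc := cnU hU
          exact use10 hR hD (by push_neg at h1; linarith)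
      · -- ¬R
        have hc := cnR hR
        by_cases hU : ∃ p ∈ A.support, 2 ≤ p.2
        · exact use01 hL hU (by push_neg at h1; linarith)
        · have hc2 := cnU hU
          push_neg at h1
          exfalso; linarith
    · -- L, U
      by_cases h3 : 1/4 < q3
      · exact use01 hL hU h3
      by_cases hR : ∃ p ∈ A.support, 2 ≤ p.1
      · by_cases hD : ∃ p ∈ A.support, p.2 ≤ -1
        · by_cases h1 : 1/4 < q1
          · exact use00 hL hD h1
          by_cases h2 : 1/4 < q2
          · exact use10 hR hD h2
          by_cases h4 : 1/4 < q4
          · exact use11 hR hU h4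
          · push_neg at h1 h2 h3 h4
            exfalso; linarith
        · have hc := cnD hD
          exact use11 hR hU (by push_neg at h3; linarith)
      · have hc := cnR hR
        by_cases hD : ∃ p ∈ A.support, p.2 ≤ -1
        · exact use00 hL hD (by push_neg at h3; linarith)
        · have hc2 := cnD hD
          push_neg at h3
          exfalso; linarith
  · rcases exists_UD (A := A) hlen hline with hD | hU
    · -- R, D
      by_cases h2 : 1/4 < q2
      · exact use10 hR hD h2
      by_cases hL : ∃ p ∈ A.support, p.1 ≤ -1
      · by_cases hU : ∃ p ∈ A.support, 2 ≤ p.2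
        · by_cases h1 : 1/4 < q1
          · exact use00 hL hD h1
          by_cases h3 : 1/4 < q3
          · exact use01 hL hU h3
          by_cases h4 : 1/4 < q4
          · exact use11 hR hU h4
          · push_neg at h1 h2 h3 h4
            exfalso; linarith
        · have hc := cnU hU
          exact use00 hL hD (by push_neg at h2; linarith)
      · have hc := cnL hL
        by_cases hU : ∃ p ∈ A.support, 2 ≤ p.2
        · exact use11 hR hU (by push_neg at h2; linarith)
        · have hc2 := cnU hU
          push_neg at h2
          exfalso; linarith
    · -- R, U
      by_cases h4 : 1/4 < q4
      · exact use11 hR hU h4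
      by_cases hL : ∃ p ∈ A.support, p.1 ≤ -1
      · by_cases hD : ∃ p ∈ A.support, p.2 ≤ -1
        · by_cases h1 : 1/4 < q1
          · exact use00 hL hD h1
          by_cases h2 : 1/4 < q2
          · exact use10 hR hD h2
          by_cases h3 : 1/4 < q3
          · exact use01 hL hU h3
          · push_neg at h1 h2 h3 h4
            exfalso; linarith
        · have hc := cnD hD
          exact use01 hL hU (by push_neg at h4; linarith)
      · have hc := cnL hL
        by_cases hD : ∃ p ∈ A.support, p.2 ≤ -1
        · exact use10 hR hD (by push_neg at h4; linarith)
        · have hc2 := cnD hD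
          push_neg at h4
          exfalso; linarith

end
end

section
/- Let C ≥ 1 and let A be a sequence over Z² all of whose elements have both coordinates bounded in absolute value by C. If y = Σ t_i a_i with non-negative reals t_i and Σ t_i = T for elements a_i of A (at most (2C+1)² distinct values), then there exist non-negative integers t̃_i with |t_i - t̃_i| < 1, Σ t̃_i = ⌈T⌉, and |y - Σ t̃_i a_i| ≤ C(2C+1)² in the Euclidean norm. -/
noncomputable section

lemma exists_top_subset {α : Type*} [DecidableEq α] (g : α → ℝ) :
    ∀ (d : ℕ) (s : Finset α), d ≤ s.card →
    ∃ U, U ⊆ s ∧ U.card = d ∧ ∀ i ∈ U, ∀ j ∈ s, j ∉ U → g j ≤ g i := by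
  intro d
  induction d with
  | zero => exact fun s _ => ⟨∅, Finset.empty_subset s, rfl, by simp⟩
  | succ d ih =>
    intro s hd
    have hs : s.Nonempty := Finset.card_pos.mp (by omega)
    obtain ⟨m, hm, hmax⟩ := Finset.exists_max_image s g hs
    obtain ⟨U', hU's, hcard, hprop⟩ := ih (s.erase m)
      (by rw [Finset.card_erase_of_mem hm]; omega)
    have hmU' : m ∉ U' := fun h => (Finset.mem_erase.mp (hU's h)).1 rfl
    refine ⟨insert m U', ?_, ?_, ?_⟩
    · exact Finset.insert_subset hm (hU's.trans (Finset.erase_subset _ _))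
    · rw [Finset.card_insert_of_notMem hmU', hcard]
    · intro i hi j hj hjU
      rcases Finset.mem_insert.mp hi with rfl | hiU'
      · exact hmax j hj
      · have hjm : j ≠ m := fun h => hjU (h ▸ Finset.mem_insert_self m U')
        exact hprop i hiU' j (Finset.mem_erase.mpr ⟨hjm, hj⟩)
          (fun h => hjU (Finset.mem_insert_of_mem h))


lemma quarter_bound (n d τ P : ℝ) (hP0 : 0 ≤ P) (hn0 : 0 ≤ n) (hτ0 : 0 < τ) (hτ1 : τ < 1)
    (hd0 : 0 ≤ d) (hdn : d ≤ n) (hPa : P ≤ (n - d) * τ) (hPb : P ≤ d * (1 - τ)) :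
    P ≤ n / 4 := by
  have hA0 : (0:ℝ) ≤ (n - d) * τ := mul_nonneg (by linarith) hτ0.le
  have hPP : P * P ≤ ((n - d) * τ) * (d * (1 - τ)) := mul_le_mul hPa hPb hP0 hA0
  have hnd : (n - d) * d ≤ n ^ 2 / 4 := by nlinarith [sq_nonneg (n - 2 * d)]
  have hτd : τ * (1 - τ) ≤ 1 / 4 := by nlinarith [sq_nonneg (1 - 2 * τ)]
  have hτd0 : (0:ℝ) ≤ τ * (1 - τ) := mul_nonneg hτ0.le (by linarith)
  have hprod : ((n - d) * d) * (τ * (1 - τ)) ≤ (n ^ 2 / 4) * (1 / 4) :=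
    mul_le_mul hnd hτd hτd0 (by positivity)
  nlinarith [hPP, hprod, hP0, hn0]

lemma final_bound (C S e1 e2 n : ℝ) (hC : 1 ≤ C) (hS0 : 0 ≤ S)
    (hn0 : 0 ≤ n) (hn : n ≤ (2 * C + 1) ^ 2) (hSn : S ≤ n / 2 + 1)
    (he1 : |e1| ≤ C * S) (he2 : |e2| ≤ C * S) :
    e1 ^ 2 + e2 ^ 2 ≤ (C * (2 * C + 1) ^ 2) ^ 2 := by
  have hK : (9:ℝ) ≤ (2 * C + 1) ^ 2 := by nlinarith
  have h1 := pow_le_pow_left₀ (abs_nonneg e1) he1 2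
  have h2 := pow_le_pow_left₀ (abs_nonneg e2) he2 2
  rw [sq_abs] at h1 h2
  have h3 : 2 * S ^ 2 ≤ ((2 * C + 1) ^ 2) ^ 2 := by nlinarith [hSn, hn, hK, hS0]
  nlinarith [h1, h2, h3, sq_nonneg C, mul_le_mul_of_nonneg_left h3 (sq_nonneg C)]

/-- rounding real coefficients bounded-coordinate lattice points:
if y = Σ t_i a_i with t_i ≥ 0, Σ t_i = T and all coordinates of the a_i bounded by C,
then there are non-negative integers t̃_i with |t_i - t̃_i| < 1, Σ t̃_i = ⌈T⌉ and
|y - Σ t̃_i a_i| ≤ C(2C+1)² in the Euclidean norm. -/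
theorem stmt13 (C : ℝ) (hC : 1 ≤ C) (s : Finset (ℤ × ℤ))
    (hbound : ∀ a ∈ s, |(a.1 : ℝ)| ≤ C ∧ |(a.2 : ℝ)| ≤ C)
    (t : (ℤ × ℤ) → ℝ) (ht : ∀ a, 0 ≤ t a)
    (T : ℝ) (hT : (∑ a ∈ s, t a) = T)
    (y : ℝ × ℝ) (hy : (∑ a ∈ s, t a • toR2 a) = y) :
    ∃ tt : (ℤ × ℤ) → ℕ,
      (∀ a ∈ s, |t a - (tt a : ℝ)| < 1) ∧
      (∑ a ∈ s, (tt a : ℤ)) = ⌈T⌉ ∧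
      Real.sqrt ((y.1 - ∑ a ∈ s, (tt a : ℝ) * (a.1 : ℝ)) ^ 2 +
        (y.2 - ∑ a ∈ s, (tt a : ℝ) * (a.2 : ℝ)) ^ 2) ≤ C * (2 * C + 1) ^ 2 := by
  classical
  set f : (ℤ × ℤ) → ℝ := fun a => Int.fract (t a) with hf
  have hf0 : ∀ a, 0 ≤ f a := fun a => Int.fract_nonneg _
  have hf1 : ∀ a, f a < 1 := fun a => Int.fract_lt_one _
  set F : ℝ := ∑ a ∈ s, f a with hFdef
  have hF0 : 0 ≤ F := Finset.sum_nonneg fun a _ => hf0 a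
  set s' : Finset (ℤ × ℤ) := s.filter (fun a => 0 < f a) with hs'
  have hFs' : ∑ a ∈ s', f a = F := by
    apply Finset.sum_filter_of_ne
    intro a _ h
    exact lt_of_le_of_ne (hf0 a) (Ne.symm h)
  set d : ℕ := (⌈F⌉).toNat with hddef
  have hceil_nonneg : 0 ≤ ⌈F⌉ := Int.ceil_nonneg hF0
  have hdint : (d : ℤ) = ⌈F⌉ := Int.toNat_of_nonneg hceil_nonneg
  have hdF : (d : ℝ) = (⌈F⌉ : ℝ) := by exact_mod_cast congrArg (Int.cast : ℤ → ℝ) hdint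
  -- d ≤ card s'
  have hFle : F ≤ (s'.card : ℝ) := by
    rw [← hFs']
    calc ∑ a ∈ s', f a ≤ ∑ _a ∈ s', (1 : ℝ) :=
          Finset.sum_le_sum fun a _ => (hf1 a).le
      _ = s'.card := by simp
  have hd_le : d ≤ s'.card := by
    have : ⌈F⌉ ≤ (s'.card : ℤ) := Int.ceil_le.mpr (by exact_mod_cast hFle)
    omega
  obtain ⟨U, hUs', hUcard, hUtop⟩ := exists_top_subset f d s' hd_le
  have hUs : U ⊆ s := hUs'.trans (Finset.filter_subset _ _)
  -- the rounded coefficients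
  refine ⟨fun a => (⌊t a⌋).toNat + (if a ∈ U then 1 else 0), ?_, ?_, ?_⟩ <;>
    [skip; skip; skip]
  case _ =>
    intro a _
    have hfloor : ((⌊t a⌋).toNat : ℝ) = (⌊t a⌋ : ℝ) := by
      exact_mod_cast congrArg (Int.cast : ℤ → ℝ)
        (Int.toNat_of_nonneg (Int.floor_nonneg.mpr (ht a)))
    by_cases haU : a ∈ U
    · have hpos : 0 < f a := (Finset.mem_filter.mp (hUs' haU)).2
      simp only [haU, if_true]
      push_cast
      rw [hfloor]
      have : t a = (⌊t a⌋ : ℝ) + f a := (Int.floor_add_fract (t a)).symm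
      rw [abs_lt]; constructor <;> nlinarith [hf1 a]
    · simp only [haU, if_false]
      push_cast
      rw [hfloor]
      have : t a = (⌊t a⌋ : ℝ) + f a := (Int.floor_add_fract (t a)).symm
      rw [abs_lt]; constructor <;> nlinarith [hf1 a, hf0 a]
  case _ =>
    have hTsplit : T = (∑ a ∈ s, (⌊t a⌋ : ℝ)) + F := by
      rw [← hT, hFdef, ← Finset.sum_add_distrib]
      exact Finset.sum_congr rfl fun a _ => (Int.floor_add_fract (t a)).symm
    have hsumint : (∑ a ∈ s, (⌊t a⌋ : ℝ)) = ((∑ a ∈ s, ⌊t a⌋ : ℤ) : ℝ) := by push_cast; ring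
    have hceilT : ⌈T⌉ = (∑ a ∈ s, ⌊t a⌋) + ⌈F⌉ := by
      rw [hTsplit, hsumint, add_comm, Int.ceil_add_intCast]; omega
    have hindic : (∑ a ∈ s, (if a ∈ U then (1:ℤ) else 0)) = (U.card : ℤ) := by
      rw [Finset.sum_ite_mem, Finset.inter_eq_right.mpr hUs]
      simp
    push_cast
    rw [Finset.sum_add_distrib]
    rw [hceilT, ← hdint, ← hUcard, ← hindic]
    congr 1
    apply Finset.sum_congr rfl
    intro a _
    exact Int.toNat_of_nonneg (Int.floor_nonneg.mpr (ht a))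
  case _ =>
    have hfloorR : ∀ a : ℤ × ℤ, (((⌊t a⌋).toNat : ℕ) : ℝ) = ((⌊t a⌋ : ℤ) : ℝ) := by
      intro a
      exact_mod_cast congrArg (Int.cast : ℤ → ℝ)
        (Int.toNat_of_nonneg (Int.floor_nonneg.mpr (ht a)))
    set δ : (ℤ × ℤ) → ℝ :=
      fun a => t a - (((⌊t a⌋).toNat + (if a ∈ U then 1 else 0) : ℕ) : ℝ) with hδ
    have hδeq : ∀ a, δ a = f a - (if a ∈ U then (1:ℝ) else 0) := by
      intro a
      have h1 : ((⌊t a⌋ : ℤ) : ℝ) + f a = t a := Int.floor_add_fract (t a)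
      simp only [hδ, Nat.cast_add, Nat.cast_ite, Nat.cast_one, Nat.cast_zero, hfloorR a]
      by_cases haU : a ∈ U <;> simp [haU] <;> linarith
    set S : ℝ := ∑ a ∈ s, |δ a| with hS
    have hS0 : 0 ≤ S := Finset.sum_nonneg fun a _ => abs_nonneg _
    have habs : ∀ a ∈ s, |δ a| = if a ∈ U then 1 - f a else f a := by
      intro a _
      rw [hδeq a]
      by_cases haU : a ∈ U
      · have hpos : 0 < f a := (Finset.mem_filter.mp (hUs' haU)).2
        simp only [haU, if_true]
        rw [abs_sub_comm, abs_of_nonneg (by linarith [hf1 a])]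
      · simp only [haU, if_false, sub_zero, abs_of_nonneg (hf0 a)]
    set FU : ℝ := ∑ a ∈ U, f a with hFU
    set P : ℝ := ∑ a ∈ s \ U, f a with hP
    have hP0 : 0 ≤ P := Finset.sum_nonneg fun a _ => hf0 a
    have hFU0 : 0 ≤ FU := Finset.sum_nonneg fun a _ => hf0 a
    have hFsplit : P + FU = F := by
      rw [hP, hFU, hFdef]; exact Finset.sum_sdiff hUs
    have hSval : S = ((d : ℝ) - FU) + P := by
      rw [hS, ← Finset.sum_sdiff hUs]
      have h1 : ∑ a ∈ s \ U, |δ a| = P := Finset.sum_congr rfl (fun a ha => by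
        rw [habs a (Finset.mem_sdiff.mp ha).1]
        simp [(Finset.mem_sdiff.mp ha).2])
      have h2 : ∑ a ∈ U, |δ a| = (d:ℝ) - FU := by
        have hc : ∀ a ∈ U, |δ a| = 1 - f a := fun a ha => by
          rw [habs a (hUs ha)]; simp [ha]
        rw [Finset.sum_congr rfl hc, Finset.sum_sub_distrib, Finset.sum_const, hUcard, hFU]
        simp [nsmul_eq_mul]
      rw [h1, h2]; ring
    have hcard_dle : d ≤ s.card :=
      le_trans hd_le (Finset.card_le_card (Finset.filter_subset _ _))
    have hncast : ((s.card : ℕ) : ℝ) ≥ 0 := by positivity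
    have hPle : P ≤ (s.card : ℝ) / 4 := by
      rcases Nat.eq_zero_or_pos d with hd0 | hdpos
      · have hceil0 : ⌈F⌉ ≤ 0 := by omega
        have hFle0 : F ≤ ((0:ℤ):ℝ) := Int.ceil_le.mp hceil0
        have hPF : P ≤ F := by linarith
        push_cast at hFle0
        linarith
      · have hUne : U.Nonempty := Finset.card_pos.mp (by omega)
        obtain ⟨i0, hi0U, hmin⟩ := Finset.exists_min_image U f hUne
        set τ := f i0 with hτ
        have hτpos : 0 < τ := (Finset.mem_filter.mp (hUs' hi0U)).2
        have hτlt : τ < 1 := hf1 i0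
        have hFUge : (d:ℝ) * τ ≤ FU := by
          have := Finset.card_nsmul_le_sum U f τ (fun a ha => hmin a ha)
          rw [hUcard] at this
          simpa [nsmul_eq_mul] using this
        have hcards : (s \ U).card = s.card - d := by
          rw [Finset.card_sdiff_of_subset hUs, hUcard]
        have hPa : P ≤ ((s.card : ℝ) - d) * τ := by
          have hb : ∀ b ∈ s \ U, f b ≤ τ := by
            intro b hb
            obtain ⟨hbs, hbU⟩ := Finset.mem_sdiff.mp hb
            by_cases hfb : 0 < f b
            · exact hUtop i0 hi0U b (Finset.mem_filter.mpr ⟨hbs, hfb⟩) hbU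
            · linarith [hf0 b, hτpos]
          have := Finset.sum_le_card_nsmul (s \ U) f τ hb
          rw [hcards] at this
          have hc : (((s.card - d : ℕ)) : ℝ) = (s.card : ℝ) - d := by
            rw [Nat.cast_sub hcard_dle]
          rw [nsmul_eq_mul, hc] at this
          exact this
        have hFled : F ≤ (d : ℝ) := by
          rw [hdF]; exact Int.le_ceil F
        have hPb : P ≤ (d:ℝ) * (1 - τ) := by
          have h : (d:ℝ) * (1 - τ) = (d:ℝ) - (d:ℝ) * τ := by ring
          rw [h]; linarith
        have hdn : (d : ℝ) ≤ (s.card : ℝ) := by exact_mod_cast hcard_dle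
        exact quarter_bound (s.card : ℝ) (d : ℝ) τ P hP0 hncast hτpos hτlt
          (by positivity) hdn hPa hPb
    have hdleF : (d : ℝ) ≤ F + 1 := by
      rw [hdF]; linarith [Int.ceil_lt_add_one F]
    have hSle : S ≤ (s.card : ℝ) / 2 + 1 := by
      rw [hSval]; linarith
    -- card bound
    have hfl1 : (1:ℤ) ≤ ⌊C⌋ := Int.le_floor.mpr (by exact_mod_cast hC)
    have hfloor_le : ((⌊C⌋ : ℤ) : ℝ) ≤ C := Int.floor_le C
    have hcardle : (s.card : ℝ) ≤ (2*C+1)^2 := by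
      have hsub : s ⊆ Finset.Icc (-⌊C⌋) ⌊C⌋ ×ˢ Finset.Icc (-⌊C⌋) ⌊C⌋ := by
        intro a ha
        obtain ⟨h1, h2⟩ := hbound a ha
        rw [abs_le] at h1 h2
        refine Finset.mem_product.mpr ⟨Finset.mem_Icc.mpr ⟨?_, ?_⟩,
          Finset.mem_Icc.mpr ⟨?_, ?_⟩⟩
        · have : -a.1 ≤ ⌊C⌋ := Int.le_floor.mpr (by push_cast; linarith)
          omega
        · exact Int.le_floor.mpr (by push_cast; linarith)
        · have : -a.2 ≤ ⌊C⌋ := Int.le_floor.mpr (by push_cast; linarith)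
          omega
        · exact Int.le_floor.mpr (by push_cast; linarith)
      have hcard_nat : s.card ≤ ((2*⌊C⌋+1).toNat)^2 := by
        calc s.card ≤ _ := Finset.card_le_card hsub
        _ = ((⌊C⌋+1-(-⌊C⌋)).toNat) * ((⌊C⌋+1-(-⌊C⌋)).toNat) := by
            rw [Finset.card_product, Int.card_Icc]
        _ = ((2*⌊C⌋+1).toNat)^2 := by rw [pow_two]; congr 2 <;> ring
      have hxt : (((2*⌊C⌋+1).toNat : ℕ) : ℤ) = 2*⌊C⌋+1 := Int.toNat_of_nonneg (by omega)
      calc (s.card:ℝ) ≤ ((((2*⌊C⌋+1).toNat)^2 : ℕ):ℝ) := by exact_mod_cast hcard_nat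
        _ = ((((2*⌊C⌋+1).toNat : ℕ) : ℤ):ℝ)^2 := by push_cast; ring
        _ = (((2*⌊C⌋+1 : ℤ)):ℝ)^2 := by rw [hxt]
        _ ≤ (2*C+1)^2 := by
            push_cast
            have h2 : (1:ℝ) ≤ ((⌊C⌋:ℤ):ℝ) := by exact_mod_cast hfl1
            nlinarith [mul_nonneg (sub_nonneg.mpr hfloor_le)
              (by linarith : (0:ℝ) ≤ C + ((⌊C⌋:ℤ):ℝ) + 1)]
    have hK : (9:ℝ) ≤ (2*C+1)^2 := by nlinarith
    -- coordinate bounds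
    have hy1 : y.1 = ∑ a ∈ s, t a * ((a.1 : ℤ) : ℝ) := by
      rw [← hy, Prod.fst_sum]
      exact Finset.sum_congr rfl fun a _ => rfl
    have hy2 : y.2 = ∑ a ∈ s, t a * ((a.2 : ℤ) : ℝ) := by
      rw [← hy, Prod.snd_sum]
      exact Finset.sum_congr rfl fun a _ => rfl
    have key : ∀ (g : (ℤ×ℤ) → ℝ), (∀ a ∈ s, |g a| ≤ C) →
        |∑ a ∈ s, δ a * g a| ≤ C * S := by
      intro g hg
      calc |∑ a ∈ s, δ a * g a| ≤ ∑ a ∈ s, |δ a * g a| := Finset.abs_sum_le_sum_abs _ _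
        _ ≤ ∑ a ∈ s, |δ a| * C := Finset.sum_le_sum fun a ha => by
            rw [abs_mul]
            exact mul_le_mul_of_nonneg_left (hg a ha) (abs_nonneg _)
        _ = C * S := by rw [hS, ← Finset.sum_mul]; ring
    have he1 : |y.1 - ∑ a ∈ s,
        (((⌊t a⌋).toNat + (if a ∈ U then 1 else 0) : ℕ) : ℝ) * ((a.1 : ℤ) : ℝ)| ≤ C * S := by
      rw [hy1, ← Finset.sum_sub_distrib]
      rw [Finset.sum_congr rfl (fun a (_ : a ∈ s) => by
        show t a * ((a.1:ℤ):ℝ) - _ * _ = δ a * ((a.1:ℤ):ℝ)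
        simp only [hδ]; ring)]
      exact key _ (fun a ha => (hbound a ha).1)
    have he2 : |y.2 - ∑ a ∈ s,
        (((⌊t a⌋).toNat + (if a ∈ U then 1 else 0) : ℕ) : ℝ) * ((a.2 : ℤ) : ℝ)| ≤ C * S := by
      rw [hy2, ← Finset.sum_sub_distrib]
      rw [Finset.sum_congr rfl (fun a (_ : a ∈ s) => by
        show t a * ((a.2:ℤ):ℝ) - _ * _ = δ a * ((a.2:ℤ):ℝ)
        simp only [hδ]; ring)]
      exact key _ (fun a ha => (hbound a ha).2)
    -- finish
    have hfinal : (y.1 - ∑ a ∈ s,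
        (((⌊t a⌋).toNat + (if a ∈ U then 1 else 0) : ℕ) : ℝ) * ((a.1 : ℤ) : ℝ))^2 +
        (y.2 - ∑ a ∈ s,
        (((⌊t a⌋).toNat + (if a ∈ U then 1 else 0) : ℕ) : ℝ) * ((a.2 : ℤ) : ℝ))^2
        ≤ (C * (2*C+1)^2)^2 :=
      final_bound C S _ _ (s.card : ℝ) hC hS0 hncast hcardle hSle he1 he2
    calc Real.sqrt _ ≤ Real.sqrt ((C * (2*C+1)^2)^2) := Real.sqrt_le_sqrt hfinal
      _ = C * (2*C+1)^2 := Real.sqrt_sq (by positivity)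

end
end
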